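/- arXiv:1210.1438 — 5 statements merged into one kernel-verified Lean document; each statement's English description precedes it below -/
import Mathlib

section
/- Let J be a B(H)-ideal and S ∈ J. Then the set of all finite sums Σ_{i=1}^m A_iSB_i with A_i, B_i ∈ J equals J(S)J, and this set also equals J²(S), the set of all finite sums Σᵢ C_iD_iX_i with C_i, D_i ∈ J and X_i ∈ (S). -/
open scoped BigOperators
open TopologicalSpace

variable {H : Type*} [NormedAddCommGroup H] [InnerProductSpace ℂ H] [CompleteSpace H]

/-- `J` is a two-sided ideal of `B(H)`: an additive subgroup closed under left and
right multiplication by arbitrary bounded operators. -/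
def IsBHIdeal (J : Set (H →L[ℂ] H)) : Prop :=
  (0 : H →L[ℂ] H) ∈ J ∧
  (∀ x ∈ J, ∀ y ∈ J, x + y ∈ J) ∧
  (∀ x ∈ J, -x ∈ J) ∧
  ∀ (A : H →L[ℂ] H), ∀ x ∈ J, A * x ∈ J ∧ x * A ∈ J

/-- `I` is a `J`-ideal: an additive subgroup of `B(H)` contained in `J` and closed
under left and right multiplication by elements of `J`. -/
def IsSubideal (J I : Set (H →L[ℂ] H)) : Prop :=
  I ⊆ J ∧ (0 : H →L[ℂ] H) ∈ I ∧
  (∀ x ∈ I, ∀ y ∈ I, x + y ∈ I) ∧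
  (∀ x ∈ I, -x ∈ I) ∧
  ∀ A ∈ J, ∀ x ∈ I, A * x ∈ I ∧ x * A ∈ I

/-- A linear `J`-ideal: a `J`-ideal closed under multiplication by complex scalars. -/
def IsLinearSubideal (J I : Set (H →L[ℂ] H)) : Prop :=
  IsSubideal J I ∧ ∀ (c : ℂ), ∀ x ∈ I, c • x ∈ I

/-- A real linear `J`-ideal: a `J`-ideal closed under multiplication by real scalars. -/
def IsRealSubideal (J I : Set (H →L[ℂ] H)) : Prop :=
  IsSubideal J I ∧ ∀ (r : ℝ), ∀ x ∈ I, r • x ∈ I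

/-- `(𝒮)`: the smallest two-sided ideal of `B(H)` containing `𝒮`. -/
def genBH (𝒮 : Set (H →L[ℂ] H)) : Set (H →L[ℂ] H) :=
  ⋂₀ {I | IsBHIdeal I ∧ 𝒮 ⊆ I}

/-- `⟨𝒮⟩_J`: the smallest `J`-ideal containing `𝒮`. -/
def genSub (J 𝒮 : Set (H →L[ℂ] H)) : Set (H →L[ℂ] H) :=
  ⋂₀ {I | IsSubideal J I ∧ 𝒮 ⊆ I}

/-- `(𝒮)_J`: the smallest linear `J`-ideal containing `𝒮`. -/
def genLin (J 𝒮 : Set (H →L[ℂ] H)) : Set (H →L[ℂ] H) :=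
  ⋂₀ {I | IsLinearSubideal J I ∧ 𝒮 ⊆ I}

/-- `(𝒮)_J^ℝ`: the smallest real linear `J`-ideal containing `𝒮`. -/
def genReal (J 𝒮 : Set (H →L[ℂ] H)) : Set (H →L[ℂ] H) :=
  ⋂₀ {I | IsRealSubideal J I ∧ 𝒮 ⊆ I}

/-- `J(𝒮)`: all finite sums `Σ Aᵢ Xᵢ` with `Aᵢ ∈ J` and `Xᵢ ∈ (𝒮)`. -/
def JGen (J 𝒮 : Set (H →L[ℂ] H)) : Set (H →L[ℂ] H) :=
  {T | ∃ (n : ℕ) (A X : Fin n → (H →L[ℂ] H)),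
    (∀ i, A i ∈ J ∧ X i ∈ genBH 𝒮) ∧ T = ∑ i, A i * X i}

/-- `J(𝒮)J`: all finite sums `Σ Aᵢ Xᵢ Bᵢ` with `Aᵢ, Bᵢ ∈ J` and `Xᵢ ∈ (𝒮)`. -/
def JGenJ (J 𝒮 : Set (H →L[ℂ] H)) : Set (H →L[ℂ] H) :=
  {T | ∃ (n : ℕ) (A X B : Fin n → (H →L[ℂ] H)),
    (∀ i, A i ∈ J ∧ X i ∈ genBH 𝒮 ∧ B i ∈ J) ∧ T = ∑ i, A i * X i * B i}

/-- `JS + SJ + J(S)J = {AS + SB + Y : A, B ∈ J, Y ∈ J(S)J}`. -/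
def JSplus (J : Set (H →L[ℂ] H)) (S : H →L[ℂ] H) : Set (H →L[ℂ] H) :=
  {T | ∃ A ∈ J, ∃ B ∈ J, ∃ Y ∈ JGenJ J {S}, T = A * S + S * B + Y}

/-- `K(H)`: the compact operators on `H`. -/
def KH : Set (H →L[ℂ] H) := {T | IsCompactOperator ⇑T}

/-- `T` is a finite-rank operator: its range is finite-dimensional. -/
def IsFiniteRank (T : H →L[ℂ] H) : Prop :=
  FiniteDimensional ℂ (LinearMap.range (T : H →ₗ[ℂ] H))

set_option maxHeartbeats 1000000
set_option synthInstance.maxHeartbeats 400000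
set_option linter.unusedSectionVars false

local notation "⟪" x ", " y "⟫" => @inner ℂ _ _ x y

open ContinuousLinearMap in
theorem exists_star_factor (T : H →L[ℂ] H) :
    ∃ A B : H →L[ℂ] H, star T = A * T * B := by
  classical
  have hpos : (0 : H →L[ℂ] H) ≤ adjoint T * T := by
    have := star_mul_self_nonneg T
    rwa [star_eq_adjoint] at this
  set R : H →L[ℂ] H := CFC.sqrt (adjoint T * T) with hRdef
  have hRnn : (0 : H →L[ℂ] H) ≤ R := CFC.sqrt_nonneg _
  have hR2 : R * R = adjoint T * T := CFC.sqrt_mul_sqrt_self _ hpos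
  have hRsym : ∀ x y : H, ⟪R x, y⟫ = ⟪x, R y⟫ := by
    have hsa : IsSelfAdjoint R := by
      rw [nonneg_iff_isPositive] at hRnn
      exact hRnn.isSelfAdjoint
    intro x y
    exact (isSelfAdjoint_iff_isSymmetric.mp hsa) x y
  have hnorm : ∀ x : H, ‖R x‖ = ‖T x‖ := by
    intro x
    have h2 : R (R x) = adjoint T (T x) := by
      have := congrFun (congrArg (fun S : H →L[ℂ] H => (S : H → H)) hR2) x
      simpa using this
    have h1 : ⟪R x, R x⟫ = ⟪T x, T x⟫ := by
      rw [hRsym x (R x), h2, adjoint_inner_right]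
    have h4 : ‖R x‖ ^ 2 = ‖T x‖ ^ 2 := by
      rw [← @inner_self_eq_norm_sq ℂ, ← @inner_self_eq_norm_sq ℂ, h1]
    nlinarith [norm_nonneg (R x), norm_nonneg (T x)]
  -- the closure of the range of `T`
  set ranT : Submodule ℂ H := LinearMap.range (T : H →ₗ[ℂ] H) with hranT
  set M : Submodule ℂ H := ranT.topologicalClosure with hM
  haveI : CompleteSpace M := Submodule.topologicalClosure.completeSpace ranT
  have hle : ranT ≤ M := ranT.le_topologicalClosure
  -- the inclusion of `ranT` into `M`
  let e : ranT →L[ℂ] M := LinearMap.mkContinuous (Submodule.inclusion hle) 1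
    (fun x => by rw [one_mul]; rfl)
  have hiso : Isometry e := AddMonoidHomClass.isometry_of_norm e (fun x => rfl)
  have hui : IsUniformInducing e := hiso.isUniformInducing
  have hdense : DenseRange e := by
    refine Topology.IsInducing.subtypeVal.dense_iff.2 fun x => ?_
    have hx : (x : H) ∈ closure (ranT : Set H) := x.prop
    convert hx
    rw [← Set.range_comp]
    exact Set.ext fun y =>
      ⟨by rintro ⟨y, rfl⟩; exact y.prop, fun hy => ⟨⟨y, hy⟩, rfl⟩⟩
  -- the map `T x ↦ R x` on `ranT`
  have hker : LinearMap.ker (T : H →ₗ[ℂ] H) ≤ LinearMap.ker (R : H →ₗ[ℂ] H) := by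
    intro x hx
    have hx' : T x = 0 := hx
    have : ‖R x‖ = 0 := by rw [hnorm, hx', norm_zero]
    simpa using norm_eq_zero.mp this
  let f₀ : ranT →ₗ[ℂ] H :=
    ((LinearMap.ker (T : H →ₗ[ℂ] H)).liftQ (R : H →ₗ[ℂ] H) hker).comp
      (LinearMap.quotKerEquivRange (T : H →ₗ[ℂ] H)).symm.toLinearMap
  have hf₀ : ∀ (x : H) (h : T x ∈ ranT), f₀ ⟨T x, h⟩ = R x := by
    intro x h
    have h5 : (LinearMap.quotKerEquivRange (T : H →ₗ[ℂ] H)) (Submodule.Quotient.mk x)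
        = ⟨T x, h⟩ := Subtype.ext (LinearMap.quotKerEquivRange_apply_mk _ _)
    have h6 := congrArg (LinearMap.quotKerEquivRange (T : H →ₗ[ℂ] H)).symm h5
    rw [LinearEquiv.symm_apply_apply] at h6
    show ((LinearMap.ker (T : H →ₗ[ℂ] H)).liftQ (R : H →ₗ[ℂ] H) hker)
      ((LinearMap.quotKerEquivRange (T : H →ₗ[ℂ] H)).symm ⟨T x, h⟩) = R x
    rw [← h6, Submodule.liftQ_apply]
    rfl
  have hf₀norm : ∀ v : ranT, ‖f₀ v‖ ≤ 1 * ‖v‖ := by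
    intro v
    obtain ⟨x, hx⟩ := LinearMap.mem_range.mp v.prop
    have hv : v = ⟨T x, by exact hx ▸ v.prop⟩ := Subtype.ext hx.symm
    rw [one_mul, hv, hf₀, hnorm]
    exact le_of_eq rfl
  let f : ranT →L[ℂ] H := LinearMap.mkContinuous f₀ 1 hf₀norm
  -- extend to `M`, compose with orthogonal projection
  let W0 : M →L[ℂ] H := f.extend e
  let W : H →L[ℂ] H := W0.comp (Submodule.orthogonalProjectionOnto M)
  have hWT : ∀ x : H, W (T x) = R x := by
    intro x
    have hTx : T x ∈ M := hle (LinearMap.mem_range_self _ x)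
    have hproj : Submodule.orthogonalProjectionOnto M (T x) = ⟨T x, hTx⟩ :=
      Submodule.orthogonalProjectionOnto_mem_subspace_eq_self (⟨T x, hTx⟩ : M)
    have he : (⟨T x, hTx⟩ : M) = e ⟨T x, LinearMap.mem_range_self _ x⟩ := Subtype.ext rfl
    show W0 (Submodule.orthogonalProjectionOnto M (T x)) = R x
    rw [hproj, he, ContinuousLinearMap.extend_eq (f := f) hdense hui]
    show f₀ _ = R x
    exact hf₀ x _
  -- R ∘ W = adjoint T
  have hM' : ∀ z : H, z ∈ M → R (W z) = adjoint T z := by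
    have hEqOn : Set.EqOn (fun z => R (W z)) (fun z => adjoint T z) (ranT : Set H) := by
      intro z hz
      obtain ⟨x, hx⟩ := LinearMap.mem_range.mp hz
      subst hx
      show R (W (T x)) = adjoint T (T x)
      rw [hWT]
      have := congrFun (congrArg (fun S : H →L[ℂ] H => (S : H → H)) hR2) x
      simpa using this
    have hcl := hEqOn.closure (R.continuous.comp W.continuous)
      ((adjoint T).continuous)
    intro z hz
    have h' : z ∈ (ranT.topologicalClosure : Set H) := hz
    rw [Submodule.topologicalClosure_coe] at h'
    exact hcl h'
  have hperp : ∀ z : H, z ∈ Mᗮ → R (W z) = adjoint T z := by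
    intro z hz
    have h7 : Submodule.orthogonalProjectionOnto M z = 0 :=
      Submodule.orthogonalProjectionOnto_apply_of_mem_orthogonal hz
    have h8 : W z = 0 := by show W0 (Submodule.orthogonalProjectionOnto M z) = 0; rw [h7, map_zero]
    have h9 : adjoint T z = 0 := by
      have h10 : ∀ v : H, ⟪adjoint T z, v⟫ = 0 := by
        intro v
        rw [adjoint_inner_left]
        have : ⟪T v, z⟫ = 0 := (Submodule.mem_orthogonal M z).mp hz (T v)
          (hle (LinearMap.mem_range_self _ v))
        simpa [inner_conj_symm] using congrArg (starRingEnd ℂ) this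
      have := h10 (adjoint T z)
      exact inner_self_eq_zero.mp this
    rw [h8, map_zero, h9]
  have hfinal : ∀ z : H, R (W z) = adjoint T z := by
    intro z
    have hdecomp : z = (Submodule.orthogonalProjectionOnto M z : H) + (z - Submodule.orthogonalProjectionOnto M z) := by abel
    have h1 := hM' _ (Submodule.orthogonalProjectionOnto M z).prop
    have h2 := hperp (z - (Submodule.orthogonalProjectionOnto M z : H)) (Submodule.sub_starProjection_mem_orthogonal z)
    calc R (W z) = R (W ((Submodule.orthogonalProjectionOnto M z : H) + (z - Submodule.orthogonalProjectionOnto M z))) := by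
          rw [← hdecomp]
      _ = R (W (Submodule.orthogonalProjectionOnto M z : H)) + R (W (z - Submodule.orthogonalProjectionOnto M z)) := by
          rw [map_add, map_add]
      _ = adjoint T (Submodule.orthogonalProjectionOnto M z : H) + adjoint T (z - Submodule.orthogonalProjectionOnto M z) := by
          rw [h1, h2]
      _ = adjoint T z := by rw [← map_add, ← hdecomp]
  refine ⟨W, W, ?_⟩
  rw [star_eq_adjoint]
  ext z
  show adjoint T z = W (T (W z))
  rw [hWT (W z), hfinal]

private lemma mem_genBH_self {𝒮 : Set (H →L[ℂ] H)} : 𝒮 ⊆ genBH 𝒮 :=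
  fun _ hx => Set.mem_sInter.mpr fun _ hI => hI.2 hx

private lemma genBH_min {𝒮 I : Set (H →L[ℂ] H)} (hI : IsBHIdeal I) (h : 𝒮 ⊆ I) :
    genBH 𝒮 ⊆ I :=
  fun _ hx => (Set.mem_sInter.mp hx) I ⟨hI, h⟩

private lemma genBH_isBHIdeal (𝒮 : Set (H →L[ℂ] H)) : IsBHIdeal (genBH 𝒮) := by
  refine ⟨Set.mem_sInter.mpr fun I hI => hI.1.1, ?_, ?_, ?_⟩
  · intro x hx y hy
    exact Set.mem_sInter.mpr fun I hI =>
      hI.1.2.1 x ((Set.mem_sInter.mp hx) I hI) y ((Set.mem_sInter.mp hy) I hI)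
  · intro x hx
    exact Set.mem_sInter.mpr fun I hI => hI.1.2.2.1 x ((Set.mem_sInter.mp hx) I hI)
  · intro A x hx
    exact ⟨Set.mem_sInter.mpr fun I hI => (hI.1.2.2.2 A x ((Set.mem_sInter.mp hx) I hI)).1,
      Set.mem_sInter.mpr fun I hI => (hI.1.2.2.2 A x ((Set.mem_sInter.mp hx) I hI)).2⟩

private lemma star_mem_of_isBHIdeal {J : Set (H →L[ℂ] H)} (hJ : IsBHIdeal J)
    {x : H →L[ℂ] H} (hx : x ∈ J) : star x ∈ J := by
  obtain ⟨A, B, hAB⟩ := exists_star_factor x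
  rw [hAB]
  exact (hJ.2.2.2 B _ (hJ.2.2.2 A x hx).1).2

private lemma mem_closure_iff_finsum {G : Set (H →L[ℂ] H)} {T : H →L[ℂ] H} :
    T ∈ AddSubmonoid.closure G ↔
      ∃ (n : ℕ) (f : Fin n → (H →L[ℂ] H)), (∀ i, f i ∈ G) ∧ T = ∑ i, f i := by
  constructor
  · intro hT
    induction hT using AddSubmonoid.closure_induction with
    | mem x hx => exact ⟨1, fun _ => x, fun _ => hx, by simp⟩
    | zero => exact ⟨0, fun i => 0, fun i => i.elim0, by simp⟩
    | add x y hx hy ihx ihy =>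
        obtain ⟨n, f, hf, rfl⟩ := ihx
        obtain ⟨m, g, hg, rfl⟩ := ihy
        refine ⟨n + m, Fin.append f g, fun i => ?_, ?_⟩
        · refine Fin.addCases (fun j => ?_) (fun j => ?_) i
          · rw [Fin.append_left]; exact hf j
          · rw [Fin.append_right]; exact hg j
        · rw [Fin.sum_univ_add]
          simp [Fin.append_left, Fin.append_right]
  · rintro ⟨n, f, hf, rfl⟩
    exact sum_mem fun i _ => AddSubmonoid.subset_closure (hf i)

/-- `{Σ AᵢSBᵢ : Aᵢ, Bᵢ ∈ J} = J(S)J = J²(S)`. -/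
theorem stmt_1 (J : Set (H →L[ℂ] H)) (hJ : IsBHIdeal J)
    (S : H →L[ℂ] H) (hS : S ∈ J) :
    {T | ∃ (m : ℕ) (A B : Fin m → (H →L[ℂ] H)),
        (∀ i, A i ∈ J ∧ B i ∈ J) ∧ T = ∑ i, A i * S * B i} = JGenJ J {S} ∧
    JGenJ J {S} =
      {T | ∃ (m : ℕ) (C D X : Fin m → (H →L[ℂ] H)),
        (∀ i, C i ∈ J ∧ D i ∈ J ∧ X i ∈ genBH {S}) ∧ T = ∑ i, C i * D i * X i} := by
  classical
  have hSmem : S ∈ genBH ({S} : Set (H →L[ℂ] H)) := mem_genBH_self rfl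
  have hgen := genBH_isBHIdeal ({S} : Set (H →L[ℂ] H))
  have hJstar : ∀ x ∈ J, star x ∈ J := fun x hx => star_mem_of_isBHIdeal hJ hx
  have hGstar : ∀ x ∈ genBH ({S} : Set (H →L[ℂ] H)), star x ∈ genBH ({S} : Set (H →L[ℂ] H)) :=
    fun x hx => star_mem_of_isBHIdeal hgen hx
  set G1 : Set (H →L[ℂ] H) := {T | ∃ A B, A ∈ J ∧ B ∈ J ∧ T = A * S * B} with hG1def
  set G2 : Set (H →L[ℂ] H) :=
    {T | ∃ A X B, A ∈ J ∧ X ∈ genBH ({S} : Set (H →L[ℂ] H)) ∧ B ∈ J ∧ T = A * X * B} with hG2def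
  set G3 : Set (H →L[ℂ] H) :=
    {T | ∃ C D X, C ∈ J ∧ D ∈ J ∧ X ∈ genBH ({S} : Set (H →L[ℂ] H)) ∧ T = C * D * X} with hG3def
  set GP : Set (H →L[ℂ] H) :=
    {T | ∃ A X, A ∈ J ∧ X ∈ genBH ({S} : Set (H →L[ℂ] H)) ∧ T = A * X} with hGPdef
  set GQ : Set (H →L[ℂ] H) :=
    {T | ∃ X B, X ∈ genBH ({S} : Set (H →L[ℂ] H)) ∧ B ∈ J ∧ T = X * B} with hGQdef
  -- the three sets in the statement are the additive closures of the generator sets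
  have hset1 : {T | ∃ (m : ℕ) (A B : Fin m → (H →L[ℂ] H)),
        (∀ i, A i ∈ J ∧ B i ∈ J) ∧ T = ∑ i, A i * S * B i}
      = (AddSubmonoid.closure G1 : Set (H →L[ℂ] H)) := by
    ext T
    simp only [Set.mem_setOf_eq, SetLike.mem_coe, mem_closure_iff_finsum]
    constructor
    · rintro ⟨m, A, B, hAB, rfl⟩
      exact ⟨m, fun i => A i * S * B i, fun i => ⟨A i, B i, (hAB i).1, (hAB i).2, rfl⟩, rfl⟩
    · rintro ⟨n, f, hf, rfl⟩
      choose A B hA hB hfi using hf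
      exact ⟨n, A, B, fun i => ⟨hA i, hB i⟩, Finset.sum_congr rfl fun i _ => hfi i⟩
  have hset2 : JGenJ J {S} = (AddSubmonoid.closure G2 : Set (H →L[ℂ] H)) := by
    ext T
    simp only [JGenJ, Set.mem_setOf_eq, SetLike.mem_coe, mem_closure_iff_finsum]
    constructor
    · rintro ⟨n, A, X, B, hAXB, rfl⟩
      exact ⟨n, fun i => A i * X i * B i,
        fun i => ⟨A i, X i, B i, (hAXB i).1, (hAXB i).2.1, (hAXB i).2.2, rfl⟩, rfl⟩
    · rintro ⟨n, f, hf, rfl⟩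
      choose A X B hA hX hB hfi using hf
      exact ⟨n, A, X, B, fun i => ⟨hA i, hX i, hB i⟩, Finset.sum_congr rfl fun i _ => hfi i⟩
  have hset3 : {T | ∃ (m : ℕ) (C D X : Fin m → (H →L[ℂ] H)),
        (∀ i, C i ∈ J ∧ D i ∈ J ∧ X i ∈ genBH {S}) ∧ T = ∑ i, C i * D i * X i}
      = (AddSubmonoid.closure G3 : Set (H →L[ℂ] H)) := by
    ext T
    simp only [Set.mem_setOf_eq, SetLike.mem_coe, mem_closure_iff_finsum]
    constructor
    · rintro ⟨m, C, D, X, hCDX, rfl⟩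
      exact ⟨m, fun i => C i * D i * X i,
        fun i => ⟨C i, D i, X i, (hCDX i).1, (hCDX i).2.1, (hCDX i).2.2, rfl⟩, rfl⟩
    · rintro ⟨n, f, hf, rfl⟩
      choose C D X hC hD hX hfi using hf
      exact ⟨n, C, D, X, fun i => ⟨hC i, hD i, hX i⟩, Finset.sum_congr rfl fun i _ => hfi i⟩
  -- `closure GP` and `closure GQ` are two-sided ideals
  have hP_op : ∀ (Wo : H →L[ℂ] H), ∀ p ∈ AddSubmonoid.closure GP,
      Wo * p ∈ AddSubmonoid.closure GP ∧ p * Wo ∈ AddSubmonoid.closure GP := by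
    intro Wo p hp
    induction hp using AddSubmonoid.closure_induction with
    | mem x hx =>
        obtain ⟨A, X, hA, hX, rfl⟩ := hx
        constructor
        · rw [← mul_assoc]
          exact AddSubmonoid.subset_closure ⟨Wo * A, X, (hJ.2.2.2 Wo A hA).1, hX, rfl⟩
        · rw [mul_assoc]
          exact AddSubmonoid.subset_closure ⟨A, X * Wo, hA, (hgen.2.2.2 Wo X hX).2, rfl⟩
    | zero => exact ⟨by rw [mul_zero]; exact zero_mem _, by rw [zero_mul]; exact zero_mem _⟩
    | add x y hx hy ihx ihy =>
        exact ⟨by rw [mul_add]; exact add_mem ihx.1 ihy.1,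
               by rw [add_mul]; exact add_mem ihx.2 ihy.2⟩
  have hQ_op : ∀ (Wo : H →L[ℂ] H), ∀ q ∈ AddSubmonoid.closure GQ,
      Wo * q ∈ AddSubmonoid.closure GQ ∧ q * Wo ∈ AddSubmonoid.closure GQ := by
    intro Wo q hq
    induction hq using AddSubmonoid.closure_induction with
    | mem x hx =>
        obtain ⟨X, B, hX, hB, rfl⟩ := hx
        constructor
        · rw [← mul_assoc]
          exact AddSubmonoid.subset_closure ⟨Wo * X, B, (hgen.2.2.2 Wo X hX).1, hB, rfl⟩
        · rw [mul_assoc]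
          exact AddSubmonoid.subset_closure ⟨X, B * Wo, hX, (hJ.2.2.2 Wo B hB).2, rfl⟩
    | zero => exact ⟨by rw [mul_zero]; exact zero_mem _, by rw [zero_mul]; exact zero_mem _⟩
    | add x y hx hy ihx ihy =>
        exact ⟨by rw [mul_add]; exact add_mem ihx.1 ihy.1,
               by rw [add_mul]; exact add_mem ihx.2 ihy.2⟩
  have hPstar : ∀ p ∈ AddSubmonoid.closure GP, star p ∈ AddSubmonoid.closure GP := by
    intro p hp
    obtain ⟨A, B, hAB⟩ := exists_star_factor p
    rw [hAB]
    exact (hP_op B _ ((hP_op A p hp).1)).2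
  have hQstar : ∀ q ∈ AddSubmonoid.closure GQ, star q ∈ AddSubmonoid.closure GQ := by
    intro q hq
    obtain ⟨A, B, hAB⟩ := exists_star_factor q
    rw [hAB]
    exact (hQ_op B _ ((hQ_op A q hq).1)).2
  -- `J(S) = (S)J` via the star operation
  have hQP : AddSubmonoid.closure GQ ≤ AddSubmonoid.closure GP := by
    rw [AddSubmonoid.closure_le]
    rintro x ⟨X, B, hX, hB, rfl⟩
    have h1 : star (X * B) ∈ GP :=
      ⟨star B, star X, hJstar B hB, hGstar X hX, by rw [star_mul]⟩
    have h2 := hPstar _ (AddSubmonoid.subset_closure h1)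
    rwa [star_star] at h2
  have hPQ : AddSubmonoid.closure GP ≤ AddSubmonoid.closure GQ := by
    rw [AddSubmonoid.closure_le]
    rintro x ⟨A, X, hA, hX, rfl⟩
    have h1 : star (A * X) ∈ GQ :=
      ⟨star X, star A, hGstar X hX, hJstar A hA, by rw [star_mul]⟩
    have h2 := hQstar _ (AddSubmonoid.subset_closure h1)
    rwa [star_star] at h2
  -- multiplying `closure GQ` on the left by an element of `J` lands in `closure G2`
  have hmul_G2 : ∀ C ∈ J, ∀ q ∈ AddSubmonoid.closure GQ,
      C * q ∈ AddSubmonoid.closure G2 := by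
    intro C hC q hq
    induction hq using AddSubmonoid.closure_induction with
    | mem x hx =>
        obtain ⟨X, B, hX, hB, rfl⟩ := hx
        rw [← mul_assoc]
        exact AddSubmonoid.subset_closure ⟨C, X, B, hC, hX, hB, rfl⟩
    | zero => rw [mul_zero]; exact zero_mem _
    | add x y hx hy ihx ihy => rw [mul_add]; exact add_mem ihx ihy
  have hmul_G3 : ∀ A ∈ J, ∀ p ∈ AddSubmonoid.closure GP,
      A * p ∈ AddSubmonoid.closure G3 := by
    intro A hA p hp
    induction hp using AddSubmonoid.closure_induction with
    | mem x hx =>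
        obtain ⟨D, X, hD, hX, rfl⟩ := hx
        rw [← mul_assoc]
        exact AddSubmonoid.subset_closure ⟨A, D, X, hA, hD, hX, rfl⟩
    | zero => rw [mul_zero]; exact zero_mem _
    | add x y hx hy ihx ihy => rw [mul_add]; exact add_mem ihx ihy
  -- the BH-ideal trick: `A * X * B ∈ closure G1` for `X ∈ (S)`, `A B ∈ J`
  have hneg1 : ∀ x ∈ AddSubmonoid.closure G1, -x ∈ AddSubmonoid.closure G1 := by
    intro x hx
    induction hx using AddSubmonoid.closure_induction with
    | mem y hy =>
        obtain ⟨A, B, hA, hB, rfl⟩ := hy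
        have h : -(A * S * B) = (-A) * S * B := by rw [neg_mul, neg_mul]
        rw [h]
        exact AddSubmonoid.subset_closure ⟨-A, B, hJ.2.2.1 A hA, hB, rfl⟩
    | zero => rw [neg_zero]; exact zero_mem _
    | add x y hx hy ihx ihy => rw [neg_add]; exact add_mem ihx ihy
  have htrick : ∀ X ∈ genBH ({S} : Set (H →L[ℂ] H)), ∀ A ∈ J, ∀ B ∈ J,
      A * X * B ∈ AddSubmonoid.closure G1 := by
    have hIideal : IsBHIdeal
        {X : H →L[ℂ] H | ∀ A ∈ J, ∀ B ∈ J, A * X * B ∈ AddSubmonoid.closure G1} := by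
      refine ⟨?_, ?_, ?_, ?_⟩
      · intro A _ B _
        rw [mul_zero, zero_mul]
        exact zero_mem _
      · intro x hx y hy A hA B hB
        have h : A * (x + y) * B = A * x * B + A * y * B := by noncomm_ring
        rw [h]
        exact add_mem (hx A hA B hB) (hy A hA B hB)
      · intro x hx A hA B hB
        have h : A * (-x) * B = -(A * x * B) := by noncomm_ring
        rw [h]
        exact hneg1 _ (hx A hA B hB)
      · intro Wo x hx
        constructor
        · intro A hA B hB
          have h : A * (Wo * x) * B = (A * Wo) * x * B := by noncomm_ring
          rw [h]
          exact hx _ (hJ.2.2.2 Wo A hA).2 B hB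
        · intro A hA B hB
          have h : A * (x * Wo) * B = A * x * (Wo * B) := by noncomm_ring
          rw [h]
          exact hx A hA _ (hJ.2.2.2 Wo B hB).1
    have hsub : genBH ({S} : Set (H →L[ℂ] H)) ⊆
        {X : H →L[ℂ] H | ∀ A ∈ J, ∀ B ∈ J, A * X * B ∈ AddSubmonoid.closure G1} := by
      refine genBH_min hIideal ?_
      intro x hx
      rw [Set.mem_singleton_iff] at hx
      subst hx
      intro A hA B hB
      exact AddSubmonoid.subset_closure ⟨A, B, hA, hB, rfl⟩
    exact fun X hX => hsub hX
  -- the two closure equalities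
  have h12 : AddSubmonoid.closure G1 = AddSubmonoid.closure G2 := by
    apply le_antisymm
    · rw [AddSubmonoid.closure_le]
      rintro x ⟨A, B, hA, hB, rfl⟩
      exact AddSubmonoid.subset_closure ⟨A, S, B, hA, hSmem, hB, rfl⟩
    · rw [AddSubmonoid.closure_le]
      rintro x ⟨A, X, B, hA, hX, hB, rfl⟩
      exact htrick X hX A hA B hB
  have h23 : AddSubmonoid.closure G2 = AddSubmonoid.closure G3 := by
    apply le_antisymm
    · rw [AddSubmonoid.closure_le]
      rintro x ⟨A, X, B, hA, hX, hB, rfl⟩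
      have hXB : X * B ∈ AddSubmonoid.closure GP :=
        hQP (AddSubmonoid.subset_closure ⟨X, B, hX, hB, rfl⟩)
      have h := hmul_G3 A hA _ hXB
      rwa [← mul_assoc] at h
    · rw [AddSubmonoid.closure_le]
      rintro x ⟨C, D, X, hC, hD, hX, rfl⟩
      have hDX : D * X ∈ AddSubmonoid.closure GQ :=
        hPQ (AddSubmonoid.subset_closure ⟨D, X, hD, hX, rfl⟩)
      have h := hmul_G2 C hC _ hDX
      rwa [← mul_assoc] at h
  constructor
  · rw [hset1, hset2, h12]
  · rw [hset2, hset3, h23]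
end

section
/- Let J be a B(H)-ideal and S ∈ J. The following are equivalent: (a) (S)_J is a B(H)-ideal; (b) ⟨S⟩_J is a B(H)-ideal; (c) (S)_J^ℝ is a B(H)-ideal; (d) (S) = J(S), i.e., (S) is J-soft; (e) there exist m ∈ ℕ and A, B, A_1, …, A_m, B_1, …, B_m ∈ J such that S = AS + SB + Σ_{i=1}^m A_iSB_i. -/
open scoped BigOperators
open TopologicalSpace

variable {H : Type*} [NormedAddCommGroup H] [InnerProductSpace ℂ H] [CompleteSpace H]

set_option synthInstance.maxHeartbeats 1000000
set_option maxHeartbeats 4000000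
set_option linter.unusedSectionVars false

namespace Stmt3Aux
variable {H : Type*} [NormedAddCommGroup H] [InnerProductSpace ℂ H] [CompleteSpace H]

/-- finite sums of elements of `G` -/
def finSums (G : Set (H →L[ℂ] H)) : Set (H →L[ℂ] H) :=
  {X | ∃ (n : ℕ) (f : Fin n → (H →L[ℂ] H)), (∀ i, f i ∈ G) ∧ X = ∑ i, f i}

theorem mem_finSums_of_list {G : Set (H →L[ℂ] H)} (l : List (H →L[ℂ] H))
    (hl : ∀ x ∈ l, x ∈ G) : l.sum ∈ finSums G := by
  refine ⟨l.length, l.get, fun i => hl _ (l.get_mem ..), ?_⟩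
  rw [← List.sum_ofFn, List.ofFn_get]

theorem finSums_eq_list {G : Set (H →L[ℂ] H)} {X : H →L[ℂ] H} :
    X ∈ finSums G ↔ ∃ l : List (H →L[ℂ] H), (∀ x ∈ l, x ∈ G) ∧ X = l.sum := by
  constructor
  · rintro ⟨n, f, hf, rfl⟩
    refine ⟨List.ofFn f, ?_, by rw [List.sum_ofFn]⟩
    intro x hx
    rw [List.mem_ofFn] at hx
    obtain ⟨i, rfl⟩ := hx
    exact hf i
  · rintro ⟨l, hl, rfl⟩
    exact mem_finSums_of_list l hl

theorem zero_mem_finSums (G : Set (H →L[ℂ] H)) : (0 : H →L[ℂ] H) ∈ finSums G :=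
  ⟨0, ![], fun i => i.elim0, by simp⟩

theorem mem_finSums_of_mem {G : Set (H →L[ℂ] H)} {x : H →L[ℂ] H} (hx : x ∈ G) :
    x ∈ finSums G := by
  rw [finSums_eq_list]
  exact ⟨[x], by simpa using hx, by simp⟩

theorem add_mem_finSums {G : Set (H →L[ℂ] H)} {x y : H →L[ℂ] H}
    (hx : x ∈ finSums G) (hy : y ∈ finSums G) : x + y ∈ finSums G := by
  rw [finSums_eq_list] at *
  obtain ⟨l₁, h₁, rfl⟩ := hx
  obtain ⟨l₂, h₂, rfl⟩ := hy
  refine ⟨l₁ ++ l₂, ?_, by rw [List.sum_append]⟩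
  intro x hx
  rcases List.mem_append.mp hx with h | h
  exacts [h₁ _ h, h₂ _ h]

theorem sum_mem_finSums {G : Set (H →L[ℂ] H)} {ι : Type*} (s : Finset ι)
    (f : ι → (H →L[ℂ] H)) (hf : ∀ i ∈ s, f i ∈ finSums G) : ∑ i ∈ s, f i ∈ finSums G := by
  classical
  induction s using Finset.induction_on with
  | empty => simpa using zero_mem_finSums G
  | insert _ _ hi ih =>
    rw [Finset.sum_insert hi]
    exact add_mem_finSums (hf _ (Finset.mem_insert_self ..))
      (ih fun i hi' => hf _ (Finset.mem_insert_of_mem hi'))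

/-- if an additive map sends generators into `finSums G'`, it maps `finSums G` there -/
theorem finSums_mono {G G' : Set (H →L[ℂ] H)} (h : G ⊆ finSums G') :
    finSums G ⊆ finSums G' := by
  rintro X ⟨n, f, hf, rfl⟩
  exact sum_mem_finSums Finset.univ f (fun i _ => h (hf i))

theorem neg_mem_finSums {G : Set (H →L[ℂ] H)}
    (hG : ∀ x ∈ G, -x ∈ finSums G) {x : H →L[ℂ] H} (hx : x ∈ finSums G) :
    -x ∈ finSums G := by
  obtain ⟨n, f, hf, rfl⟩ := hx
  rw [← Finset.sum_neg_distrib]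
  exact sum_mem_finSums _ _ (fun i _ => hG _ (hf i))

theorem mul_left_mem_finSums {G G' : Set (H →L[ℂ] H)} (T : H →L[ℂ] H)
    (hG : ∀ x ∈ G, T * x ∈ finSums G') {x : H →L[ℂ] H} (hx : x ∈ finSums G) :
    T * x ∈ finSums G' := by
  obtain ⟨n, f, hf, rfl⟩ := hx
  rw [Finset.mul_sum]
  exact sum_mem_finSums _ _ (fun i _ => hG _ (hf i))

theorem mul_right_mem_finSums {G G' : Set (H →L[ℂ] H)} (T : H →L[ℂ] H)
    (hG : ∀ x ∈ G, x * T ∈ finSums G') {x : H →L[ℂ] H} (hx : x ∈ finSums G) :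
    x * T ∈ finSums G' := by
  obtain ⟨n, f, hf, rfl⟩ := hx
  rw [Finset.sum_mul]
  exact sum_mem_finSums _ _ (fun i _ => hG _ (hf i))

theorem star_mem_finSums {G G' : Set (H →L[ℂ] H)}
    (hG : ∀ x ∈ G, star x ∈ finSums G') {x : H →L[ℂ] H} (hx : x ∈ finSums G) :
    star x ∈ finSums G' := by
  obtain ⟨n, f, hf, rfl⟩ := hx
  rw [star_sum]
  exact sum_mem_finSums _ _ (fun i _ => hG _ (hf i))


section Sets
variable (J : Set (H →L[ℂ] H)) (S : H →L[ℂ] H)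

def Eset : Set (H →L[ℂ] H) := finSums {x | ∃ T₁ T₂, x = T₁ * S * T₂}
def Nset : Set (H →L[ℂ] H) := finSums {x | ∃ A T, A ∈ J ∧ x = A * S * T}
def Sset : Set (H →L[ℂ] H) := finSums {x | ∃ T B, B ∈ J ∧ x = T * S * B}
def Fset : Set (H →L[ℂ] H) := finSums {x | ∃ A B, A ∈ J ∧ B ∈ J ∧ x = A * S * B}

def Mset : Set (H →L[ℂ] H) :=
  {x | ∃ A ∈ J, ∃ B ∈ J, ∃ Y ∈ Fset J S, x = A * S + S * B + Y}

end Sets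

section Basic
variable {J : Set (H →L[ℂ] H)} {S : H →L[ℂ] H}

theorem smul_mem_J (hJ : IsBHIdeal J) (c : ℂ) {A : H →L[ℂ] H} (hA : A ∈ J) : c • A ∈ J := by
  have := (hJ.2.2.2 (c • (1 : H →L[ℂ] H)) A hA).1
  rwa [smul_mul_assoc, one_mul] at this

theorem sum_mem_J (hJ : IsBHIdeal J) {ι : Type*} (s : Finset ι) (f : ι → (H →L[ℂ] H))
    (hf : ∀ i ∈ s, f i ∈ J) : ∑ i ∈ s, f i ∈ J := by
  classical
  induction s using Finset.induction_on with
  | empty => simpa using hJ.1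
  | insert _ _ hi ih =>
    rw [Finset.sum_insert hi]
    exact hJ.2.1 _ (hf _ (Finset.mem_insert_self ..)) _
      (ih fun i hi' => hf _ (Finset.mem_insert_of_mem hi'))

-- Eset is a B(H)-ideal containing S
theorem S_mem_Eset : S ∈ Eset S :=
  mem_finSums_of_mem ⟨1, 1, by simp⟩

theorem isBHIdeal_Eset : IsBHIdeal (Eset S) := by
  refine ⟨zero_mem_finSums _, fun x hx y hy => add_mem_finSums hx hy, ?_, ?_⟩
  · intro x hx
    refine neg_mem_finSums ?_ hx
    rintro x ⟨T₁, T₂, rfl⟩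
    exact mem_finSums_of_mem ⟨-T₁, T₂, by simp⟩
  · intro A x hx
    constructor
    · refine mul_left_mem_finSums A ?_ hx
      rintro x ⟨T₁, T₂, rfl⟩
      exact mem_finSums_of_mem ⟨A * T₁, T₂, by noncomm_ring⟩
    · refine mul_right_mem_finSums A ?_ hx
      rintro x ⟨T₁, T₂, rfl⟩
      exact mem_finSums_of_mem ⟨T₁, T₂ * A, by noncomm_ring⟩

theorem Eset_subset {I : Set (H →L[ℂ] H)} (hI : IsBHIdeal I) (hSI : S ∈ I) :
    Eset S ⊆ I := by
  rintro X ⟨n, f, hf, rfl⟩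
  refine Finset.sum_induction f (· ∈ I) (fun a b ha hb => hI.2.1 a ha b hb) hI.1 ?_
  intro i _
  obtain ⟨T₁, T₂, h⟩ := hf i
  rw [h]
  exact (hI.2.2.2 T₂ _ ((hI.2.2.2 T₁ S hSI).1)).2

theorem genBH_eq : genBH {S} = Eset S := by
  apply subset_antisymm
  · exact Set.sInter_subset_of_mem ⟨isBHIdeal_Eset, by simpa using S_mem_Eset⟩
  · intro x hx
    rintro I ⟨hI, hSI⟩
    exact Eset_subset hI (hSI rfl) hx

theorem Fset_subset_Nset : Fset J S ⊆ Nset J S := by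
  apply finSums_mono
  rintro x ⟨A, B, hA, hB, rfl⟩
  exact mem_finSums_of_mem ⟨A, B, hA, rfl⟩

theorem Nset_subset_Eset : Nset J S ⊆ Eset S := by
  apply finSums_mono
  rintro x ⟨A, T, hA, rfl⟩
  exact mem_finSums_of_mem ⟨A, T, rfl⟩

theorem Sset_subset_Eset : Sset J S ⊆ Eset S := by
  apply finSums_mono
  rintro x ⟨T, B, hB, rfl⟩
  exact mem_finSums_of_mem ⟨T, B, rfl⟩

theorem Fset_subset_Eset : Fset J S ⊆ Eset S :=
  (Fset_subset_Nset).trans (Nset_subset_Eset)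

theorem isBHIdeal_Nset (hJ : IsBHIdeal J) : IsBHIdeal (Nset J S) := by
  refine ⟨zero_mem_finSums _, fun x hx y hy => add_mem_finSums hx hy, ?_, ?_⟩
  · intro x hx
    refine neg_mem_finSums ?_ hx
    rintro x ⟨A, T, hA, rfl⟩
    exact mem_finSums_of_mem ⟨-A, T, hJ.2.2.1 _ hA, by simp⟩
  · intro T' x hx
    constructor
    · refine mul_left_mem_finSums T' ?_ hx
      rintro x ⟨A, T, hA, rfl⟩
      exact mem_finSums_of_mem ⟨T' * A, T, (hJ.2.2.2 T' A hA).1, by noncomm_ring⟩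
    · refine mul_right_mem_finSums T' ?_ hx
      rintro x ⟨A, T, hA, rfl⟩
      exact mem_finSums_of_mem ⟨A, T * T', hA, by noncomm_ring⟩

theorem isBHIdeal_Sset (hJ : IsBHIdeal J) : IsBHIdeal (Sset J S) := by
  refine ⟨zero_mem_finSums _, fun x hx y hy => add_mem_finSums hx hy, ?_, ?_⟩
  · intro x hx
    refine neg_mem_finSums ?_ hx
    rintro x ⟨T, B, hB, rfl⟩
    exact mem_finSums_of_mem ⟨-T, B, hB, by simp⟩
  · intro T' x hx
    constructor
    · refine mul_left_mem_finSums T' ?_ hx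
      rintro x ⟨T, B, hB, rfl⟩
      exact mem_finSums_of_mem ⟨T' * T, B, hB, by noncomm_ring⟩
    · refine mul_right_mem_finSums T' ?_ hx
      rintro x ⟨T, B, hB, rfl⟩
      exact mem_finSums_of_mem ⟨T, B * T', (hJ.2.2.2 T' B hB).2, by noncomm_ring⟩

theorem isBHIdeal_Fset (hJ : IsBHIdeal J) : IsBHIdeal (Fset J S) := by
  refine ⟨zero_mem_finSums _, fun x hx y hy => add_mem_finSums hx hy, ?_, ?_⟩
  · intro x hx
    refine neg_mem_finSums ?_ hx
    rintro x ⟨A, B, hA, hB, rfl⟩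
    exact mem_finSums_of_mem ⟨-A, B, hJ.2.2.1 _ hA, hB, by simp⟩
  · intro T' x hx
    constructor
    · refine mul_left_mem_finSums T' ?_ hx
      rintro x ⟨A, B, hA, hB, rfl⟩
      exact mem_finSums_of_mem ⟨T' * A, B, (hJ.2.2.2 T' A hA).1, hB, by noncomm_ring⟩
    · refine mul_right_mem_finSums T' ?_ hx
      rintro x ⟨A, B, hA, hB, rfl⟩
      exact mem_finSums_of_mem ⟨A, B * T', hA, (hJ.2.2.2 T' B hB).2, by noncomm_ring⟩

theorem finSums_subset_J (hJ : IsBHIdeal J) {G : Set (H →L[ℂ] H)} (hG : G ⊆ J) :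
    finSums G ⊆ J := by
  rintro X ⟨n, f, hf, rfl⟩
  exact sum_mem_J hJ _ _ (fun i _ => hG (hf i))

theorem Fset_subset_J (hJ : IsBHIdeal J) (hS : S ∈ J) : Fset J S ⊆ J := by
  refine finSums_subset_J hJ ?_
  rintro x ⟨A, B, hA, hB, rfl⟩
  exact (hJ.2.2.2 B _ ((hJ.2.2.2 A S hS).1)).2

theorem Nset_subset_J (hJ : IsBHIdeal J) (hS : S ∈ J) : Nset J S ⊆ J := by
  refine finSums_subset_J hJ ?_
  rintro x ⟨A, T, hA, rfl⟩
  rw [mul_assoc]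
  exact (hJ.2.2.2 (S * T) A hA).2

theorem JGen_eq (hJ : IsBHIdeal J) : JGen J {S} = Nset J S := by
  apply subset_antisymm
  · rintro X ⟨n, A, Y, hAY, rfl⟩
    refine sum_mem_finSums _ _ (fun i _ => ?_)
    have hYi : Y i ∈ Eset S := by
      have := (hAY i).2
      rwa [genBH_eq] at this
    refine mul_left_mem_finSums (A i) ?_ hYi
    rintro x ⟨T₁, T₂, rfl⟩
    exact mem_finSums_of_mem ⟨A i * T₁, T₂, (hJ.2.2.2 T₁ _ (hAY i).1).2, by noncomm_ring⟩
  · rintro X ⟨n, f, hf, rfl⟩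
    refine ⟨n, fun i => (hf i).choose, fun i => S * ((hf i).choose_spec).choose, fun i => ?_, ?_⟩
    · refine ⟨((hf i).choose_spec).choose_spec.1, ?_⟩
      rw [genBH_eq]
      simp only
      exact ((isBHIdeal_Eset (S := S)).2.2.2 _ _ S_mem_Eset).2
    · refine Finset.sum_congr rfl (fun i _ => ?_)
      have := ((hf i).choose_spec).choose_spec.2
      rw [this, mul_assoc]

theorem zero_mem_Mset (hJ : IsBHIdeal J) : (0 : H →L[ℂ] H) ∈ Mset J S :=
  ⟨0, hJ.1, 0, hJ.1, 0, zero_mem_finSums _, by simp⟩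

theorem Mset_add (hJ : IsBHIdeal J) {x y : H →L[ℂ] H}
    (hx : x ∈ Mset J S) (hy : y ∈ Mset J S) : x + y ∈ Mset J S := by
  obtain ⟨A, hA, B, hB, Y, hY, rfl⟩ := hx
  obtain ⟨A', hA', B', hB', Y', hY', rfl⟩ := hy
  refine ⟨A + A', hJ.2.1 _ hA _ hA', B + B', hJ.2.1 _ hB _ hB', Y + Y',
    add_mem_finSums hY hY', ?_⟩
  rw [add_mul, mul_add]
  abel

theorem Mset_neg (hJ : IsBHIdeal J) {x : H →L[ℂ] H} (hx : x ∈ Mset J S) :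
    -x ∈ Mset J S := by
  obtain ⟨A, hA, B, hB, Y, hY, rfl⟩ := hx
  refine ⟨-A, hJ.2.2.1 _ hA, -B, hJ.2.2.1 _ hB, -Y,
    neg_mem_finSums (fun x hx => ?_) hY, ?_⟩
  · obtain ⟨A', B', hA', hB', rfl⟩ := hx
    exact mem_finSums_of_mem ⟨-A', B', hJ.2.2.1 _ hA', hB', by simp⟩
  · rw [neg_mul, mul_neg]
    abel

theorem Mset_sub (hJ : IsBHIdeal J) {x y : H →L[ℂ] H}
    (hx : x ∈ Mset J S) (hy : y ∈ Mset J S) : x - y ∈ Mset J S := by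
  rw [sub_eq_add_neg]
  exact Mset_add hJ hx (Mset_neg hJ hy)

theorem Mset_smul (hJ : IsBHIdeal J) (c : ℂ) {x : H →L[ℂ] H} (hx : x ∈ Mset J S) :
    c • x ∈ Mset J S := by
  obtain ⟨A, hA, B, hB, Y, hY, rfl⟩ := hx
  refine ⟨c • A, smul_mem_J hJ c hA, c • B, smul_mem_J hJ c hB, c • Y, ?_, ?_⟩
  · obtain ⟨n, f, hf, rfl⟩ := hY
    rw [Finset.smul_sum]
    refine sum_mem_finSums _ _ (fun i _ => ?_)
    obtain ⟨A', B', hA', hB', h⟩ := hf i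
    rw [h]
    exact mem_finSums_of_mem ⟨c • A', B', smul_mem_J hJ c hA', hB', by
      rw [smul_mul_assoc, smul_mul_assoc]⟩
  · rw [smul_add, smul_add, smul_mul_assoc, mul_smul_comm]

theorem Mset_smul_real (hJ : IsBHIdeal J) (r : ℝ) {x : H →L[ℂ] H} (hx : x ∈ Mset J S) :
    r • x ∈ Mset J S := by
  have : r • x = ((r : ℂ)) • x := by
    rw [← smul_one_smul ℂ r x]
    norm_num
  rw [this]
  exact Mset_smul hJ _ hx

theorem Mset_zsmul (hJ : IsBHIdeal J) (n : ℤ) {x : H →L[ℂ] H} (hx : x ∈ Mset J S) :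
    n • x ∈ Mset J S := by
  have : n • x = ((n : ℂ)) • x := by rw [Int.cast_smul_eq_zsmul]
  rw [this]
  exact Mset_smul hJ _ hx

theorem Mset_mul_left (hJ : IsBHIdeal J) {A' : H →L[ℂ] H} (hA' : A' ∈ J)
    {x : H →L[ℂ] H} (hx : x ∈ Mset J S) : A' * x ∈ Mset J S := by
  obtain ⟨A, hA, B, hB, Y, hY, rfl⟩ := hx
  refine ⟨A' * A, (hJ.2.2.2 A' A hA).1, 0, hJ.1, A' * (S * B) + A' * Y, ?_, ?_⟩
  · refine add_mem_finSums (mem_finSums_of_mem ⟨A', B, hA', hB, by noncomm_ring⟩) ?_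
    refine mul_left_mem_finSums A' (fun x hx => ?_) hY
    obtain ⟨C, D, hC, hD, rfl⟩ := hx
    exact mem_finSums_of_mem ⟨A' * C, D, (hJ.2.2.2 A' C hC).1, hD, by noncomm_ring⟩
  · rw [mul_add, mul_add, mul_zero]
    noncomm_ring

theorem Mset_mul_right (hJ : IsBHIdeal J) {A' : H →L[ℂ] H} (hA' : A' ∈ J)
    {x : H →L[ℂ] H} (hx : x ∈ Mset J S) : x * A' ∈ Mset J S := by
  obtain ⟨A, hA, B, hB, Y, hY, rfl⟩ := hx
  refine ⟨0, hJ.1, B * A', (hJ.2.2.2 A' B hB).2, (A * S) * A' + Y * A', ?_, ?_⟩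
  · refine add_mem_finSums (mem_finSums_of_mem ⟨A, A', hA, hA', rfl⟩) ?_
    refine mul_right_mem_finSums A' (fun x hx => ?_) hY
    obtain ⟨C, D, hC, hD, rfl⟩ := hx
    exact mem_finSums_of_mem ⟨C, D * A', hC, (hJ.2.2.2 A' D hD).2, by noncomm_ring⟩
  · rw [add_mul, add_mul, zero_mul]
    noncomm_ring

end Basic

section GenForms
variable (J : Set (H →L[ℂ] H)) (S : H →L[ℂ] H)

def GLset : Set (H →L[ℂ] H) := {x | ∃ (c : ℂ), ∃ m ∈ Mset J S, x = c • S + m}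
def GZset : Set (H →L[ℂ] H) := {x | ∃ (n : ℤ), ∃ m ∈ Mset J S, x = n • S + m}
def GRset : Set (H →L[ℂ] H) := {x | ∃ (r : ℝ), ∃ m ∈ Mset J S, x = r • S + m}

variable {J S}

theorem S_mem_GLset (hJ : IsBHIdeal J) : S ∈ GLset J S :=
  ⟨1, 0, zero_mem_Mset hJ, by simp⟩

theorem Mset_subset_GLset : Mset J S ⊆ GLset J S :=
  fun m hm => ⟨0, m, hm, by simp⟩

/-- Membership of `Fset` in any J-ideal containing S -/
theorem Fset_subset_subideal {I : Set (H →L[ℂ] H)} (hI : IsSubideal J I) (hSI : S ∈ I) :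
    Fset J S ⊆ I := by
  rintro X ⟨n, f, hf, rfl⟩
  refine Finset.sum_induction f (· ∈ I) (fun a b ha hb => hI.2.2.1 a ha b hb) hI.2.1 ?_
  intro i _
  obtain ⟨A, B, hA, hB, h⟩ := hf i
  rw [h]
  exact (hI.2.2.2.2 B hB _ ((hI.2.2.2.2 A hA S hSI).1)).2

theorem Mset_subset_subideal {I : Set (H →L[ℂ] H)} (hI : IsSubideal J I) (hSI : S ∈ I) :
    Mset J S ⊆ I := by
  rintro x ⟨A, hA, B, hB, Y, hY, rfl⟩
  refine hI.2.2.1 _ (hI.2.2.1 _ ?_ _ ?_) _ (Fset_subset_subideal hI hSI hY)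
  · exact (hI.2.2.2.2 A hA S hSI).1
  · exact (hI.2.2.2.2 B hB S hSI).2

theorem zsmul_mem_subideal {I : Set (H →L[ℂ] H)} (hI : IsSubideal J I)
    {x : H →L[ℂ] H} (hx : x ∈ I) (n : ℤ) : n • x ∈ I := by
  induction n using Int.induction_on with
  | zero => simpa using hI.2.1
  | succ k ih =>
    have : ((k : ℤ) + 1) • x = (k : ℤ) • x + x := by rw [add_zsmul, one_zsmul]
    rw [this]
    exact hI.2.2.1 _ ih _ hx
  | pred k ih =>
    have : (-(k : ℤ) - 1) • x = (-(k : ℤ)) • x + -x := by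
      rw [sub_zsmul, one_zsmul]
    rw [this]
    exact hI.2.2.1 _ ih _ (hI.2.2.2.1 _ hx)

theorem isSubideal_GLset (hJ : IsBHIdeal J) (hS : S ∈ J) : IsSubideal J (GLset J S) := by
  refine ⟨?_, ⟨0, 0, zero_mem_Mset hJ, by simp⟩, ?_, ?_, ?_⟩
  · rintro x ⟨c, m, hm, rfl⟩
    refine hJ.2.1 _ ?_ _ (Mset_subset_subideal ⟨le_refl _, hJ.1, hJ.2.1, hJ.2.2.1,
      fun A hA x hx => hJ.2.2.2 A x hx⟩ hS hm)
    exact smul_mem_J hJ c hS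
  · rintro x ⟨c, m, hm, rfl⟩ y ⟨c', m', hm', rfl⟩
    exact ⟨c + c', m + m', Mset_add hJ hm hm', by rw [add_smul]; abel⟩
  · rintro x ⟨c, m, hm, rfl⟩
    exact ⟨-c, -m, Mset_neg hJ hm, by rw [neg_smul]; abel⟩
  · rintro A hA x ⟨c, m, hm, rfl⟩
    constructor
    · refine ⟨0, (c • A) * S + A * m, Mset_add hJ ⟨c • A, smul_mem_J hJ c hA, 0, hJ.1, 0,
        zero_mem_finSums _, by simp⟩ (Mset_mul_left hJ hA hm), ?_⟩
      rw [mul_add, mul_smul_comm, smul_mul_assoc]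
      simp
    · refine ⟨0, S * (c • A) + m * A, Mset_add hJ ⟨0, hJ.1, c • A, smul_mem_J hJ c hA, 0,
        zero_mem_finSums _, by simp⟩ (Mset_mul_right hJ hA hm), ?_⟩
      rw [add_mul, smul_mul_assoc, mul_smul_comm]
      simp

theorem genLin_eq (hJ : IsBHIdeal J) (hS : S ∈ J) : genLin J {S} = GLset J S := by
  apply subset_antisymm
  · refine Set.sInter_subset_of_mem ⟨⟨isSubideal_GLset hJ hS, ?_⟩, by
      simpa using S_mem_GLset hJ⟩
    rintro c x ⟨c', m, hm, rfl⟩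
    exact ⟨c * c', c • m, Mset_smul hJ c hm, by rw [smul_add, smul_smul]⟩
  · rintro x ⟨c, m, hm, rfl⟩ I ⟨hI, hSI⟩
    have hSI' : S ∈ I := hSI rfl
    exact hI.1.2.2.1 _ (hI.2 c _ hSI') _ (Mset_subset_subideal hI.1 hSI' hm)

theorem isSubideal_GZset (hJ : IsBHIdeal J) (hS : S ∈ J) : IsSubideal J (GZset J S) := by
  refine ⟨?_, ⟨0, 0, zero_mem_Mset hJ, by simp⟩, ?_, ?_, ?_⟩
  · rintro x ⟨n, m, hm, rfl⟩
    refine hJ.2.1 _ ?_ _ (Mset_subset_subideal ⟨le_refl _, hJ.1, hJ.2.1, hJ.2.2.1,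
      fun A hA x hx => hJ.2.2.2 A x hx⟩ hS hm)
    have : (n : ℤ) • S = ((n : ℂ)) • S := by rw [Int.cast_smul_eq_zsmul]
    rw [this]
    exact smul_mem_J hJ _ hS
  · rintro x ⟨n, m, hm, rfl⟩ y ⟨n', m', hm', rfl⟩
    exact ⟨n + n', m + m', Mset_add hJ hm hm', by rw [add_zsmul]; abel⟩
  · rintro x ⟨n, m, hm, rfl⟩
    exact ⟨-n, -m, Mset_neg hJ hm, by rw [neg_zsmul]; abel⟩
  · rintro A hA x ⟨n, m, hm, rfl⟩
    have hxa : A * ((n : ℤ) • S + m) = (((n : ℂ)) • A) * S + A * m := by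
      rw [mul_add, ← Int.cast_smul_eq_zsmul ℂ, mul_smul_comm, smul_mul_assoc]
    have hxb : ((n : ℤ) • S + m) * A = S * (((n : ℂ)) • A) + m * A := by
      rw [add_mul, ← Int.cast_smul_eq_zsmul ℂ, smul_mul_assoc, mul_smul_comm]
    constructor
    · refine ⟨0, ((n : ℂ) • A) * S + A * m, Mset_add hJ ?_ (Mset_mul_left hJ hA hm),
        by rw [hxa]; simp⟩
      exact ⟨(n : ℂ) • A, smul_mem_J hJ _ hA, 0, hJ.1, 0, zero_mem_finSums _, by simp⟩
    · refine ⟨0, S * ((n : ℂ) • A) + m * A, Mset_add hJ ?_ (Mset_mul_right hJ hA hm),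
        by rw [hxb]; simp⟩
      exact ⟨0, hJ.1, (n : ℂ) • A, smul_mem_J hJ _ hA, 0, zero_mem_finSums _, by simp⟩

theorem genSub_eq (hJ : IsBHIdeal J) (hS : S ∈ J) : genSub J {S} = GZset J S := by
  apply subset_antisymm
  · exact Set.sInter_subset_of_mem ⟨isSubideal_GZset hJ hS, by
      exact Set.singleton_subset_iff.mpr (⟨1, 0, zero_mem_Mset hJ, by simp⟩ : S ∈ GZset J S)⟩
  · rintro x ⟨n, m, hm, rfl⟩ I ⟨hI, hSI⟩
    have hSI' : S ∈ I := hSI rfl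
    exact hI.2.2.1 _ (zsmul_mem_subideal hI hSI' n) _ (Mset_subset_subideal hI hSI' hm)

theorem isSubideal_GRset (hJ : IsBHIdeal J) (hS : S ∈ J) : IsSubideal J (GRset J S) := by
  refine ⟨?_, ⟨0, 0, zero_mem_Mset hJ, by simp⟩, ?_, ?_, ?_⟩
  · rintro x ⟨r, m, hm, rfl⟩
    refine hJ.2.1 _ ?_ _ (Mset_subset_subideal ⟨le_refl _, hJ.1, hJ.2.1, hJ.2.2.1,
      fun A hA x hx => hJ.2.2.2 A x hx⟩ hS hm)
    have : (r : ℝ) • S = ((r : ℂ)) • S := by rw [← smul_one_smul ℂ r S]; norm_num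
    rw [this]
    exact smul_mem_J hJ _ hS
  · rintro x ⟨r, m, hm, rfl⟩ y ⟨r', m', hm', rfl⟩
    exact ⟨r + r', m + m', Mset_add hJ hm hm', by rw [add_smul]; abel⟩
  · rintro x ⟨r, m, hm, rfl⟩
    exact ⟨-r, -m, Mset_neg hJ hm, by rw [neg_smul]; abel⟩
  · rintro A hA x ⟨r, m, hm, rfl⟩
    have hrc : ∀ y : H →L[ℂ] H, (r : ℝ) • y = ((r : ℂ)) • y := by
      intro y; rw [← smul_one_smul ℂ r y]; norm_num
    have hxa : A * ((r : ℝ) • S + m) = (((r : ℂ)) • A) * S + A * m := by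
      rw [mul_add, hrc S, mul_smul_comm, smul_mul_assoc]
    have hxb : ((r : ℝ) • S + m) * A = S * (((r : ℂ)) • A) + m * A := by
      rw [add_mul, hrc S, smul_mul_assoc, mul_smul_comm]
    constructor
    · refine ⟨0, ((r : ℂ) • A) * S + A * m, Mset_add hJ ?_ (Mset_mul_left hJ hA hm),
        by rw [hxa]; simp⟩
      exact ⟨(r : ℂ) • A, smul_mem_J hJ _ hA, 0, hJ.1, 0, zero_mem_finSums _, by simp⟩
    · refine ⟨0, S * ((r : ℂ) • A) + m * A, Mset_add hJ ?_ (Mset_mul_right hJ hA hm),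
        by rw [hxb]; simp⟩
      exact ⟨0, hJ.1, (r : ℂ) • A, smul_mem_J hJ _ hA, 0, zero_mem_finSums _, by simp⟩

theorem rsmul_mem_subideal {I : Set (H →L[ℂ] H)} (hI : IsRealSubideal J I)
    {x : H →L[ℂ] H} (hx : x ∈ I) (r : ℝ) : r • x ∈ I := hI.2 r x hx

theorem genReal_eq (hJ : IsBHIdeal J) (hS : S ∈ J) : genReal J {S} = GRset J S := by
  apply subset_antisymm
  · refine Set.sInter_subset_of_mem ⟨⟨isSubideal_GRset hJ hS, ?_⟩, by
      exact Set.singleton_subset_iff.mpr (⟨1, 0, zero_mem_Mset hJ, by simp⟩ : S ∈ GRset J S)⟩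
    rintro r x ⟨r', m, hm, rfl⟩
    exact ⟨r * r', r • m, Mset_smul_real hJ r hm, by rw [smul_add, smul_smul]⟩
  · rintro x ⟨r, m, hm, rfl⟩ I ⟨hI, hSI⟩
    have hSI' : S ∈ I := hSI rfl
    exact hI.1.2.2.1 _ (hI.2 r _ hSI') _ (Mset_subset_subideal hI.1 hSI' hm)

end GenForms

section Analysis

open ContinuousLinearMap in
theorem key_polar (C : H →L[ℂ] H) : ∃ W : H →L[ℂ] H, star C = star W * C * star W := by
  classical
  set a : H →L[ℂ] H := star C * C with ha_def
  have ha : (0 : H →L[ℂ] H) ≤ a := star_mul_self_nonneg C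
  set T : H →L[ℂ] H := CFC.sqrt a with hT_def
  have hT0 : (0 : H →L[ℂ] H) ≤ T := CFC.sqrt_nonneg (a := a)
  have hTsa : IsSelfAdjoint T := .of_nonneg hT0
  have hTT : T * T = a := CFC.sqrt_mul_sqrt_self a ha
  -- inner ℂ identity
  have hinner : ∀ x y : H, (inner ℂ (T x) (T y) : ℂ) = inner ℂ (C x) (C y) := by
    intro x y
    have h1 : (inner ℂ (T x) (T y) : ℂ) = inner ℂ x (T (T y)) := by
      calc (inner ℂ (T x) (T y) : ℂ) = inner ℂ ((adjoint T) x) (T y) := by rw [hTsa.adjoint_eq]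
        _ = inner ℂ x (T (T y)) := ContinuousLinearMap.adjoint_inner_left T (T y) x
    have h2 : T (T y) = (adjoint C) (C y) := by
      have : T (T y) = (T * T) y := rfl
      rw [this, hTT, ha_def, ContinuousLinearMap.star_eq_adjoint]; rfl
    rw [h1, h2, ContinuousLinearMap.adjoint_inner_right]
  have hnorm : ∀ x : H, ‖T x‖ = ‖C x‖ := by
    intro x
    have := hinner x x
    rw [inner_self_eq_norm_sq_to_K (𝕜 := ℂ), inner_self_eq_norm_sq_to_K (𝕜 := ℂ)] at this
    have h2 : (‖T x‖ : ℝ) ^ 2 = ‖C x‖ ^ 2 := by exact_mod_cast this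
    nlinarith [norm_nonneg (T x), norm_nonneg (C x)]
  have keyw : ∀ x y : H, T x = T y → C x = C y := by
    intro x y h
    have : ‖C x - C y‖ = 0 := by
      rw [← map_sub, ← hnorm, map_sub, h, sub_self, norm_zero]
    rwa [norm_eq_zero, sub_eq_zero] at this
  -- the range submodule and its closure
  set p : Submodule ℂ H := LinearMap.range (T : H →ₗ[ℂ] H) with hp_def
  set M : Submodule ℂ H := p.topologicalClosure with hM_def
  haveI : CompleteSpace M := IsClosed.completeSpace_coe (hs := p.isClosed_topologicalClosure)
  have memp : ∀ x : H, T x ∈ p := fun x => LinearMap.mem_range_self _ x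
  -- the map  T x ↦ C x  on p
  have choice_spec : ∀ v : ↥p, T ((LinearMap.mem_range.mp v.2).choose) = ↑v :=
    fun v => (LinearMap.mem_range.mp v.2).choose_spec
  set g0 : ↥p → H := fun v => C ((LinearMap.mem_range.mp v.2).choose) with hg0_def
  have g0_eq : ∀ (v : ↥p) (x : H), T x = ↑v → g0 v = C x := by
    intro v x hx
    exact keyw _ _ (by rw [choice_spec v, hx])
  have g0_add : ∀ u v : ↥p, g0 (u + v) = g0 u + g0 v := by
    intro u v
    have h1 : T ((LinearMap.mem_range.mp u.2).choose + (LinearMap.mem_range.mp v.2).choose)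
        = ↑(u + v) := by rw [map_add, choice_spec u, choice_spec v]; rfl
    rw [g0_eq (u+v) _ h1, map_add]
  have g0_smul : ∀ (c : ℂ) (v : ↥p), g0 (c • v) = c • g0 v := by
    intro c v
    have h1 : T (c • (LinearMap.mem_range.mp v.2).choose) = ↑(c • v) := by
      rw [map_smul, choice_spec v]; rfl
    rw [g0_eq (c • v) _ h1, map_smul]
  have g0_norm : ∀ v : ↥p, ‖g0 v‖ = ‖v‖ := by
    intro v
    rw [hg0_def]
    simp only
    rw [← hnorm, choice_spec v]
    rfl
  set g : ↥p →ₗ[ℂ] H := { toFun := g0, map_add' := g0_add, map_smul' := g0_smul } with hg_def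
  set f₀ : ↥p →L[ℂ] H := LinearMap.mkContinuous g 1 (fun v => by
    rw [one_mul]; exact le_of_eq (g0_norm v)) with hf0_def
  -- inclusion p → M
  set e0 : ↥p →ₗ[ℂ] ↥M := Submodule.inclusion p.le_topologicalClosure with he0_def
  have e0_coe : ∀ v : ↥p, ((e0 v : ↥M) : H) = ↑v := fun v => rfl
  set e : ↥p →L[ℂ] ↥M := LinearMap.mkContinuous e0 1 (fun v => by
    rw [one_mul]; exact le_of_eq rfl) with he_def
  have he_isom : Isometry e := AddMonoidHomClass.isometry_of_norm e (fun v => rfl)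
  have h_dense : DenseRange e := by
    intro m
    rw [closure_subtype]
    have himg : Subtype.val '' Set.range e = (p : Set H) := by
      ext x
      constructor
      · rintro ⟨y, ⟨v, rfl⟩, rfl⟩
        exact v.2
      · intro hx
        exact ⟨e ⟨x, hx⟩, ⟨⟨x, hx⟩, rfl⟩, rfl⟩
    rw [himg]
    have h2 : (↑m : H) ∈ (p.topologicalClosure : Set H) := m.2
    rwa [Submodule.topologicalClosure_coe] at h2
  have h_unif : IsUniformInducing e := he_isom.isUniformInducing
  set Φ : ↥M →L[ℂ] H := f₀.extend e with hPhi_def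
  have hPhi_eq : ∀ v : ↥p, Φ (e v) = f₀ v := fun v => ContinuousLinearMap.extend_eq f₀ h_dense h_unif v
  have hPhi_norm : ∀ m : ↥M, ‖Φ m‖ = ‖m‖ := by
    have hcl : IsClosed {m : ↥M | ‖Φ m‖ = ‖m‖} :=
      isClosed_eq (Φ.continuous.norm) continuous_norm
    intro m
    refine h_dense.induction_on m hcl (fun v => ?_)
    rw [hPhi_eq v]
    have : ‖f₀ v‖ = ‖v‖ := g0_norm v
    rw [this]
    rfl
  set Ψ : ↥M →ₗᵢ[ℂ] H := ⟨Φ.toLinearMap, hPhi_norm⟩ with hPsi_def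
  set P : H →L[ℂ] ↥M := M.orthogonalProjection with hP_def
  set W : H →L[ℂ] H := Φ.comp P with hW_def
  -- (1) W ∘ T = C
  have hWT : ∀ x : H, W (T x) = C x := by
    intro x
    have hTxM : T x ∈ M := p.le_topologicalClosure (memp x)
    have hproj : P (T x) = e ⟨T x, memp x⟩ := by
      apply Subtype.ext
      exact (Submodule.starProjection_eq_self_iff (K := M)).mpr hTxM
    have : W (T x) = Φ (e ⟨T x, memp x⟩) := by rw [hW_def]; simp only [ContinuousLinearMap.comp_apply]; rw [hproj]
    rw [this, hPhi_eq]
    exact g0_eq _ _ rfl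
  have hWinner : ∀ z y : H, (inner ℂ (W z) (W y) : ℂ) = inner ℂ ((P z : ↥M)) (P y) := by
    intro z y
    exact Ψ.inner_map_map (P z) (P y)
  -- (2) adjoint W ∘ C = T
  have hWC : ∀ x : H, (ContinuousLinearMap.adjoint W) (C x) = T x := by
    intro x
    refine ext_inner_right ℂ (fun y => ?_)
    rw [ContinuousLinearMap.adjoint_inner_left]
    have hTxM : T x ∈ M := p.le_topologicalClosure (memp x)
    have h1 : (inner ℂ (C x) (W y) : ℂ) = inner ℂ (W (T x)) (W y) := by rw [hWT x]
    have h2 : (inner ℂ (W (T x)) (W y) : ℂ) = inner ℂ ((P (T x) : ↥M)) (P y) := hWinner _ _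
    have hproj : P (T x) = (⟨T x, hTxM⟩ : ↥M) := by
      apply Subtype.ext
      exact (Submodule.starProjection_eq_self_iff (K := M)).mpr hTxM
    have h3 : (inner ℂ ((P (T x) : ↥M)) (P y) : ℂ) = inner ℂ (T x) ((P y : ↥M) : H) := by
      rw [hproj, Submodule.coe_inner]
    have h4 : (inner ℂ (T x) (((P y : ↥M)) : H) : ℂ) = inner ℂ (T x) y := by
      have horth : y - ((P y : ↥M) : H) ∈ Mᗮ := Submodule.sub_starProjection_mem_orthogonal (K := M) y
      have hz : (inner ℂ (T x) (y - ((P y : ↥M) : H)) : ℂ) = 0 :=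
        (Submodule.mem_orthogonal M _).1 horth (T x) hTxM
      rw [inner_sub_right] at hz
      linear_combination -hz
    rw [h1, h2, h3, h4]
  -- assemble
  refine ⟨W, ?_⟩
  have h1 : W * T = C := by
    ext x
    exact hWT x
  have h2 : star W * C = T := by
    ext x
    rw [ContinuousLinearMap.star_eq_adjoint]
    exact hWC x
  calc star C = star (W * T) := by rw [h1]
    _ = star T * star W := by rw [star_mul]
    _ = T * star W := by rw [hTsa.star_eq]
    _ = (star W * C) * star W := by rw [h2]
    _ = star W * C * star W := by rw [mul_assoc]


variable {J : Set (H →L[ℂ] H)} {S : H →L[ℂ] H}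

theorem star_mem_J (hJ : IsBHIdeal J) {B : H →L[ℂ] H} (hB : B ∈ J) : star B ∈ J := by
  obtain ⟨W, hW⟩ := key_polar B
  rw [hW]
  exact (hJ.2.2.2 (star W) _ ((hJ.2.2.2 (star W) B hB).1)).2

theorem SB_mem_Nset (hJ : IsBHIdeal J) {B : H →L[ℂ] H} (hB : B ∈ J) :
    S * B ∈ Nset J S := by
  obtain ⟨W, hW⟩ := key_polar (star B * star S)
  obtain ⟨W₂, hW₂⟩ := key_polar S
  have h1 : S * B = star W * (star B * star S) * star W := by
    rw [← hW, star_mul, star_star, star_star]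
  have h2 : S * B = (star W * star B * star W₂) * S * (star W₂ * star W) := by
    rw [h1, hW₂]
    noncomm_ring
  refine mem_finSums_of_mem ⟨star W * star B * star W₂, star W₂ * star W, ?_, h2⟩
  exact (hJ.2.2.2 (star W₂) _ ((hJ.2.2.2 (star W) _ (star_mem_J hJ hB)).1)).2

theorem Mset_subset_Nset (hJ : IsBHIdeal J) : Mset J S ⊆ Nset J S := by
  rintro x ⟨A, hA, B, hB, Y, hY, rfl⟩
  refine add_mem_finSums (add_mem_finSums ?_ (SB_mem_Nset hJ hB)) (Fset_subset_Nset hY)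
  exact mem_finSums_of_mem ⟨A, 1, hA, by rw [mul_one]⟩

theorem P_of_S_mem_Nset (hJ : IsBHIdeal J) (h : S ∈ Nset J S) : S ∈ Fset J S := by
  obtain ⟨W₂, hW₂⟩ := key_polar S
  -- star S ∈ Sset
  have hstar : star S ∈ Sset J S := by
    refine star_mem_finSums (fun x hx => ?_) h
    obtain ⟨A, T, hA, rfl⟩ := hx
    have : star (A * S * T) = (star T * star W₂) * S * (star W₂ * star A) := by
      rw [star_mul, star_mul, hW₂]
      noncomm_ring
    rw [this]
    exact mem_finSums_of_mem ⟨star T * star W₂, star W₂ * star A,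
      (hJ.2.2.2 (star W₂) _ (star_mem_J hJ hA)).1, rfl⟩
  -- S ∈ Sset
  have hS_Sset : S ∈ Sset J S := by
    obtain ⟨W₃, hW₃⟩ := key_polar (star S)
    rw [star_star] at hW₃
    have : star W₃ * star S * star W₃ ∈ Sset J S :=
      ((isBHIdeal_Sset hJ).2.2.2 (star W₃) _
        (((isBHIdeal_Sset hJ).2.2.2 (star W₃) _ hstar).1)).2
    rwa [← hW₃] at this
  -- Sset ⊆ Fset, given S ∈ Nset
  have hsub : Sset J S ⊆ Fset J S := by
    refine finSums_mono ?_
    rintro x ⟨T, B, hB, rfl⟩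
    have h1 : T * S ∈ Nset J S := by
      refine mul_left_mem_finSums T (fun x hx => ?_) h
      obtain ⟨A, T₁, hA, rfl⟩ := hx
      exact mem_finSums_of_mem ⟨T * A, T₁, (hJ.2.2.2 T A hA).1, by noncomm_ring⟩
    refine mul_right_mem_finSums B (fun x hx => ?_) h1
    obtain ⟨A, T₁, hA, rfl⟩ := hx
    exact mem_finSums_of_mem ⟨A, T₁ * B, hA, (hJ.2.2.2 T₁ B hB).1, by noncomm_ring⟩
  exact hsub hS_Sset

open ContinuousLinearMap in
theorem exists_orth_isometries (hinf : ¬ FiniteDimensional ℂ H) :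
    ∃ V₁ V₂ : H →L[ℂ] H, star V₁ * V₁ = 1 ∧ star V₂ * V₂ = 1 ∧ star V₂ * V₁ = 0 := by
  classical
  obtain ⟨w, b, hb⟩ := exists_hilbertBasis ℂ H
  haveI hwinf : Infinite w := by
    by_contra hfin
    haveI : Finite w := not_infinite_iff_finite.mp hfin
    apply hinf
    have hsp := b.dense_span
    rw [hb, Subtype.range_coe] at hsp
    haveI hfd : FiniteDimensional ℂ (Submodule.span ℂ w) :=
      FiniteDimensional.span_of_finite ℂ w.toFinite
    have hclosed : IsClosed ((Submodule.span ℂ w : Submodule ℂ H) : Set H) :=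
      Submodule.closed_of_finiteDimensional _
    have htop : (Submodule.span ℂ w : Submodule ℂ H) = ⊤ := by
      rw [← hclosed.submodule_topologicalClosure_eq]
      exact hsp
    have : FiniteDimensional ℂ (⊤ : Submodule ℂ H) := htop ▸ hfd
    exact (Submodule.topEquiv (R := ℂ) (M := H)).finiteDimensional
  obtain ⟨e⟩ : Nonempty ((w ⊕ w) ≃ w) := by
    rw [← Cardinal.eq, Cardinal.mk_sum]
    simp only [Cardinal.lift_id]
    exact Cardinal.add_eq_self (Cardinal.infinite_iff.mp hwinf)
  have hv : Orthonormal ℂ (fun s : w ⊕ w => (b (e s) : H)) :=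
    b.orthonormal.comp _ e.injective
  have hv1 : Orthonormal ℂ ((fun s : w ⊕ w => (b (e s) : H)) ∘ Sum.inl) :=
    hv.comp _ Sum.inl_injective
  have hv2 : Orthonormal ℂ ((fun s : w ⊕ w => (b (e s) : H)) ∘ Sum.inr) :=
    hv.comp _ Sum.inr_injective
  set L1 : lp (fun _ : w => ℂ) 2 →ₗᵢ[ℂ] H := hv1.orthogonalFamily.linearIsometry with hL1
  set L2 : lp (fun _ : w => ℂ) 2 →ₗᵢ[ℂ] H := hv2.orthogonalFamily.linearIsometry with hL2
  set W1 : H →ₗᵢ[ℂ] H := L1.comp b.repr.toLinearIsometry with hW1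
  set W2 : H →ₗᵢ[ℂ] H := L2.comp b.repr.toLinearIsometry with hW2
  set V₁ : H →L[ℂ] H := W1.toContinuousLinearMap with hV1
  set V₂ : H →L[ℂ] H := W2.toContinuousLinearMap with hV2
  have hisom : ∀ (W : H →ₗᵢ[ℂ] H),
      star W.toContinuousLinearMap * W.toContinuousLinearMap = 1 := by
    intro W
    ext x
    refine ext_inner_right ℂ (fun y => ?_)
    rw [ContinuousLinearMap.mul_apply, ContinuousLinearMap.star_eq_adjoint,
      ContinuousLinearMap.adjoint_inner_left]
    have : (W.toContinuousLinearMap) x = W x := rfl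
    rw [this]
    have : (W.toContinuousLinearMap) y = W y := rfl
    rw [this, W.inner_map_map]
    simp
  refine ⟨V₁, V₂, hisom W1, hisom W2, ?_⟩
  -- orthogonality of ranges
  have horth : ∀ x y : H, (inner ℂ (W1 x) (W2 y) : ℂ) = 0 := by
    intro x y
    have hs2 : HasSum (fun i : w => (b.repr y) i • ((fun s : w ⊕ w => (b (e s) : H)) ∘ Sum.inr) i)
        (W2 y) := by
      have := hv2.orthogonalFamily.hasSum_linearIsometry (b.repr y)
      simp only [LinearIsometry.toSpanSingleton_apply] at this
      exact this
    have hterm : ∀ i : w, (inner ℂ (W1 x) ((b.repr y) i •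
        ((fun s : w ⊕ w => (b (e s) : H)) ∘ Sum.inr) i) : ℂ) = 0 := by
      intro i
      rw [inner_smul_right]
      have hz : (inner ℂ (((fun s : w ⊕ w => (b (e s) : H)) ∘ Sum.inr) i) (W1 x) : ℂ) = 0 := by
        have hs1 : HasSum (fun j : w => (b.repr x) j •
            ((fun s : w ⊕ w => (b (e s) : H)) ∘ Sum.inl) j) (W1 x) := by
          have := hv1.orthogonalFamily.hasSum_linearIsometry (b.repr x)
          simp only [LinearIsometry.toSpanSingleton_apply] at this
          exact this
        have hmap := hs1.mapL (innerSL ℂ (((fun s : w ⊕ w => (b (e s) : H)) ∘ Sum.inr) i))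
        have hzero : (fun j : w => (innerSL ℂ (((fun s : w ⊕ w => (b (e s) : H)) ∘ Sum.inr) i))
            ((b.repr x) j • ((fun s : w ⊕ w => (b (e s) : H)) ∘ Sum.inl) j)) = fun _ => 0 := by
          funext j
          rw [innerSL_apply_apply, inner_smul_right]
          have : (inner ℂ (((fun s : w ⊕ w => (b (e s) : H)) ∘ Sum.inr) i)
              (((fun s : w ⊕ w => (b (e s) : H)) ∘ Sum.inl) j) : ℂ) = 0 :=
            hv.2 (by simp : (Sum.inr i : w ⊕ w) ≠ Sum.inl j)
          rw [this, mul_zero]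
        rw [hzero] at hmap
        have := hmap.unique hasSum_zero
        rw [innerSL_apply_apply] at this
        exact this
      rw [← inner_conj_symm, hz, map_zero, mul_zero]
    have hmap2 := hs2.mapL (innerSL ℂ (W1 x))
    have : (fun i : w => (innerSL ℂ (W1 x)) ((b.repr y) i •
        ((fun s : w ⊕ w => (b (e s) : H)) ∘ Sum.inr) i)) = fun _ => 0 := by
      funext i
      rw [innerSL_apply_apply]
      exact hterm i
    rw [this] at hmap2
    have := hmap2.unique hasSum_zero
    rw [innerSL_apply_apply] at this
    exact this
  ext x
  refine ext_inner_right ℂ (fun y => ?_)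
  rw [ContinuousLinearMap.mul_apply, ContinuousLinearMap.star_eq_adjoint,
    ContinuousLinearMap.adjoint_inner_left]
  have h0 : (inner ℂ ((V₁ : H →L[ℂ] H) x) (V₂ y) : ℂ) = 0 := horth x y
  rw [h0]
  simp

noncomputable def rkone (u v : H) : H →L[ℂ] H := (innerSL ℂ v).smulRight u

theorem rkone_apply (u v x : H) : rkone u v x = (inner ℂ v x : ℂ) • u := rfl

theorem rkone_mem_J {J : Set (H →L[ℂ] H)} {S : H →L[ℂ] H}
    (hJ : IsBHIdeal J) (hS : S ∈ J) (hSne : S ≠ 0) (u v : H) :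
    rkone u v ∈ J := by
  have : ∃ w : H, S w ≠ 0 := by
    by_contra hcon
    push_neg at hcon
    exact hSne (ContinuousLinearMap.ext fun x => by rw [hcon x]; rfl)
  obtain ⟨w, hw⟩ := this
  have hc : ((‖S w‖ : ℂ) ^ 2) ≠ 0 :=
    pow_ne_zero 2 (Complex.ofReal_ne_zero.mpr (norm_ne_zero_iff.mpr hw))
  set R₂ : H →L[ℂ] H := rkone w v with hR2
  set R₁ : H →L[ℂ] H := ((‖S w‖ : ℂ) ^ 2)⁻¹ • rkone u (S w) with hR1
  have heq : R₁ * (S * R₂) = rkone u v := by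
    ext x
    rw [ContinuousLinearMap.mul_apply, ContinuousLinearMap.mul_apply]
    rw [rkone_apply w v x, map_smul, hR1]
    rw [ContinuousLinearMap.smul_apply, rkone_apply, inner_smul_right,
      inner_self_eq_norm_sq_to_K, rkone_apply]
    rw [smul_smul]
    congr 1
    field_simp
    exact mul_div_cancel_right₀ _ hc
  rw [← heq]
  exact (hJ.2.2.2 R₁ _ ((hJ.2.2.2 R₂ S hS).2)).1

theorem P_of_GLset_BH {J : Set (H →L[ℂ] H)} {S : H →L[ℂ] H}
    (hJ : IsBHIdeal J) (hS : S ∈ J) (ha : IsBHIdeal (GLset J S)) :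
    S ∈ Fset J S := by
  classical
  by_cases hN : S ∈ Nset J S
  · exact P_of_S_mem_Nset hJ hN
  exfalso
  have hSne : S ≠ 0 := fun h => hN (by rw [h]; exact zero_mem_finSums _)
  have hTS : ∀ T : H →L[ℂ] H, ∃ c : ℂ, ∃ m ∈ Nset J S, T * S = c • S + m := by
    intro T
    obtain ⟨c, m, hm, heq⟩ := (ha.2.2.2 T S (S_mem_GLset hJ)).1
    exact ⟨c, m, Mset_subset_Nset hJ hm, heq⟩
  have hNsmul : ∀ (c : ℂ) (x : H →L[ℂ] H), x ∈ Nset J S → c • x ∈ Nset J S := by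
    intro c x hx
    have h1 : c • x = (c • (1 : H →L[ℂ] H)) * x := by rw [smul_mul_assoc, one_mul]
    rw [h1]
    exact ((isBHIdeal_Nset hJ).2.2.2 _ _ hx).1
  have hNsub : ∀ x y : H →L[ℂ] H, x ∈ Nset J S → y ∈ Nset J S → x - y ∈ Nset J S := by
    intro x y hx hy
    rw [sub_eq_add_neg]
    exact add_mem_finSums hx ((isBHIdeal_Nset hJ).2.2.1 y hy)
  have huniq : ∀ (c c' : ℂ) (m m' : H →L[ℂ] H), m ∈ Nset J S → m' ∈ Nset J S →
      c • S + m = c' • S + m' → c = c' := by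
    intro c c' m m' hm hm' heq
    by_contra hne
    apply hN
    have h1 : (c - c') • S = m' - m := by
      rw [sub_smul]
      have : c • S = c' • S + m' - m := by rw [← heq]; abel
      rw [this]; abel
    have h2 := hNsmul (c - c')⁻¹ _ (h1 ▸ hNsub m' m hm' hm)
    rwa [smul_smul, inv_mul_cancel₀ (sub_ne_zero.mpr hne), one_smul] at h2
  set φ : (H →L[ℂ] H) → ℂ := fun T => (hTS T).choose with hφdef
  have hφ : ∀ T, ∃ m ∈ Nset J S, T * S = φ T • S + m := fun T => (hTS T).choose_spec
  have hφ_eq : ∀ (T : H →L[ℂ] H) (c : ℂ) (m : H →L[ℂ] H), m ∈ Nset J S →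
      T * S = c • S + m → φ T = c := by
    intro T c m hm heq
    obtain ⟨m', hm', heq'⟩ := hφ T
    exact huniq _ _ _ _ hm' hm (heq'.symm.trans heq)
  have hφ_one : φ 1 = 1 := hφ_eq 1 1 0 (zero_mem_finSums _) (by simp)
  have hφ_J : ∀ A ∈ J, φ A = 0 := fun A hA => hφ_eq A 0 (A * S)
    (mem_finSums_of_mem ⟨A, 1, hA, by rw [mul_one]⟩) (by simp)
  have hφ_mul : ∀ T T', φ (T * T') = φ T * φ T' := by
    intro T T'
    obtain ⟨m, hm, heq⟩ := hφ T
    obtain ⟨m', hm', heq'⟩ := hφ T'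
    refine hφ_eq _ _ (φ T' • m + T * m')
      (add_mem_finSums (hNsmul _ _ hm) (((isBHIdeal_Nset hJ).2.2.2 T _ hm').1)) ?_
    calc (T * T') * S = T * (T' * S) := by rw [mul_assoc]
      _ = T * (φ T' • S + m') := by rw [heq']
      _ = φ T' • (T * S) + T * m' := by rw [mul_add, mul_smul_comm]
      _ = φ T' • (φ T • S + m) + T * m' := by rw [heq]
      _ = (φ T * φ T') • S + (φ T' • m + T * m') := by
          rw [smul_add, smul_smul, mul_comm (φ T') (φ T)]; abel
  have hφ_add : ∀ T T', φ (T + T') = φ T + φ T' := by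
    intro T T'
    obtain ⟨m, hm, heq⟩ := hφ T
    obtain ⟨m', hm', heq'⟩ := hφ T'
    refine hφ_eq _ _ (m + m') (add_mem_finSums hm hm') ?_
    rw [add_mul, heq, heq', add_smul]
    abel
  have hφ_rk : ∀ u v : H, φ (rkone u v) = 0 := fun u v =>
    hφ_J _ (rkone_mem_J hJ hS hSne u v)
  set ψ : (H →L[ℂ] H) →+ ℂ := AddMonoidHom.mk' φ hφ_add with hψdef
  by_cases hfd : FiniteDimensional ℂ H
  · set bb := stdOrthonormalBasis ℂ H with hbb
    have hone : (1 : H →L[ℂ] H) = ∑ i, rkone (bb i) (bb i) := by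
      ext x
      rw [ContinuousLinearMap.one_apply, ContinuousLinearMap.sum_apply]
      have : ∀ i, rkone (bb i) (bb i) x = (inner ℂ (bb i) x : ℂ) • bb i := fun i => rfl
      simp_rw [this]
      exact (bb.sum_repr' x).symm
    have h0 : φ 1 = 0 := by
      have : ψ (1 : H →L[ℂ] H) = ψ (∑ i, rkone (bb i) (bb i)) := by rw [← hone]
      rw [map_sum] at this
      have hz : ∀ i ∈ Finset.univ, ψ (rkone (bb i) (bb i)) = 0 := fun i _ => hφ_rk _ _
      rw [Finset.sum_congr rfl hz, Finset.sum_const_zero] at this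
      exact this
    rw [hφ_one] at h0
    exact one_ne_zero h0
  · obtain ⟨V₁, V₂, h11, h22, h21⟩ := exists_orth_isometries hfd
    have hφV2 : φ (star V₂) * φ V₂ = 1 := by rw [← hφ_mul, h22, hφ_one]
    have hφ11 : φ (star V₁) * φ V₁ = 1 := by rw [← hφ_mul, h11, hφ_one]
    have hφ21 : φ (star V₂) * φ V₁ = 0 := by
      rw [← hφ_mul, h21]
      exact hφ_J 0 hJ.1
    have hV2ne : φ (star V₂) ≠ 0 := fun h => by
      rw [h, zero_mul] at hφV2; exact one_ne_zero hφV2.symm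
    have hV1 : φ V₁ = 0 := by
      rcases mul_eq_zero.mp hφ21 with h | h
      · exact absurd h hV2ne
      · exact h
    rw [hV1, mul_zero] at hφ11
    exact one_ne_zero hφ11.symm

end Analysis

section Assemble
variable {J : Set (H →L[ℂ] H)} {S : H →L[ℂ] H}

theorem Mset_subset_Fset_of_P (hJ : IsBHIdeal J) (hP : S ∈ Fset J S) :
    Mset J S ⊆ Fset J S := by
  rintro x ⟨A, hA, B, hB, Y, hY, rfl⟩
  exact add_mem_finSums (add_mem_finSums ((isBHIdeal_Fset hJ).2.2.2 A _ hP).1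
    ((isBHIdeal_Fset hJ).2.2.2 B _ hP).2) hY

theorem Fset_subset_Mset (hJ : IsBHIdeal J) {x : H →L[ℂ] H} (hx : x ∈ Fset J S) :
    x ∈ Mset J S := ⟨0, hJ.1, 0, hJ.1, x, hx, by simp⟩

theorem GLset_eq_Fset_of_P (hJ : IsBHIdeal J) (hP : S ∈ Fset J S) :
    GLset J S = Fset J S := by
  apply subset_antisymm
  · rintro x ⟨c, m, hm, rfl⟩
    refine add_mem_finSums ?_ (Mset_subset_Fset_of_P hJ hP hm)
    have : c • S = (c • (1 : H →L[ℂ] H)) * S := by rw [smul_mul_assoc, one_mul]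
    rw [this]
    exact ((isBHIdeal_Fset hJ).2.2.2 _ _ hP).1
  · intro x hx
    exact ⟨0, x, Fset_subset_Mset hJ hx, by simp⟩

theorem GZset_eq_Fset_of_P (hJ : IsBHIdeal J) (hP : S ∈ Fset J S) :
    GZset J S = Fset J S := by
  apply subset_antisymm
  · rintro x ⟨n, m, hm, rfl⟩
    refine add_mem_finSums ?_ (Mset_subset_Fset_of_P hJ hP hm)
    have : (n : ℤ) • S = (((n : ℂ)) • (1 : H →L[ℂ] H)) * S := by
      rw [smul_mul_assoc, one_mul, Int.cast_smul_eq_zsmul]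
    rw [this]
    exact ((isBHIdeal_Fset hJ).2.2.2 _ _ hP).1
  · intro x hx
    exact ⟨0, x, Fset_subset_Mset hJ hx, by simp⟩

theorem GRset_eq_Fset_of_P (hJ : IsBHIdeal J) (hP : S ∈ Fset J S) :
    GRset J S = Fset J S := by
  apply subset_antisymm
  · rintro x ⟨r, m, hm, rfl⟩
    refine add_mem_finSums ?_ (Mset_subset_Fset_of_P hJ hP hm)
    have : (r : ℝ) • S = (((r : ℂ)) • (1 : H →L[ℂ] H)) * S := by
      rw [smul_mul_assoc, one_mul, ← smul_one_smul ℂ r S]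
      norm_num
    rw [this]
    exact ((isBHIdeal_Fset hJ).2.2.2 _ _ hP).1
  · intro x hx
    exact ⟨0, x, Fset_subset_Mset hJ hx, by simp⟩

theorem Eset_eq_Fset_of_P (hJ : IsBHIdeal J) (hP : S ∈ Fset J S) :
    Eset S = Fset J S :=
  subset_antisymm (Eset_subset (isBHIdeal_Fset hJ) hP) Fset_subset_Eset

theorem Nset_eq_Fset_of_P (hJ : IsBHIdeal J) (hP : S ∈ Fset J S) :
    Nset J S = Fset J S :=
  subset_antisymm (fun x hx => (Eset_eq_Fset_of_P hJ hP) ▸ (Nset_subset_Eset hx))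
    Fset_subset_Nset

-- P from each of the five conditions
theorem P_of_a (hJ : IsBHIdeal J) (hS : S ∈ J) (ha : IsBHIdeal (genLin J {S})) :
    S ∈ Fset J S := by
  rw [genLin_eq hJ hS] at ha
  exact P_of_GLset_BH hJ hS ha

theorem P_of_b (hJ : IsBHIdeal J) (hS : S ∈ J) (hb : IsBHIdeal (genSub J {S})) :
    S ∈ Fset J S := by
  rw [genSub_eq hJ hS] at hb
  have hmem : S ∈ GZset J S := ⟨1, 0, zero_mem_Mset hJ, by simp⟩
  have h2 : ((2 : ℂ)⁻¹ • (1 : H →L[ℂ] H)) * S ∈ GZset J S := (hb.2.2.2 _ S hmem).1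
  rw [smul_mul_assoc, one_mul] at h2
  obtain ⟨n, m, hm, heq⟩ := h2
  set c : ℂ := (2 : ℂ)⁻¹ - (n : ℂ) with hc_def
  have hc : c ≠ 0 := by
    intro h
    have h1 : ((2 : ℂ))⁻¹ = (n : ℂ) := by
      have := sub_eq_zero.mp h
      exact this
    have h2' : ((2 * n - 1 : ℤ) : ℂ) = 0 := by
      push_cast
      field_simp at h1
      linear_combination -h1
    have h3 := Int.cast_eq_zero.mp h2'
    omega
  have hmm : c • S = m := by
    calc c • S = (2 : ℂ)⁻¹ • S - ((n : ℂ)) • S := by rw [hc_def, sub_smul]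
      _ = ((n : ℤ) • S + m) - (n : ℤ) • S := by rw [heq, Int.cast_smul_eq_zsmul]
      _ = m := by abel
  have hs2 : S = c⁻¹ • m := by
    rw [← hmm, smul_smul, inv_mul_cancel₀ hc, one_smul]
  have : S ∈ Mset J S := by
    nth_rewrite 2 [hs2]
    exact Mset_smul hJ c⁻¹ hm
  exact P_of_S_mem_Nset hJ (Mset_subset_Nset hJ this)

theorem P_of_c (hJ : IsBHIdeal J) (hS : S ∈ J) (hc : IsBHIdeal (genReal J {S})) :
    S ∈ Fset J S := by
  rw [genReal_eq hJ hS] at hc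
  have hmem : S ∈ GRset J S := ⟨1, 0, zero_mem_Mset hJ, by simp⟩
  have h2 : (Complex.I • (1 : H →L[ℂ] H)) * S ∈ GRset J S := (hc.2.2.2 _ S hmem).1
  rw [smul_mul_assoc, one_mul] at h2
  obtain ⟨r, m, hm, heq⟩ := h2
  set c : ℂ := Complex.I - (r : ℂ) with hc_def
  have hcne : c ≠ 0 := by
    intro h
    have := congrArg Complex.im h
    simp [hc_def] at this
  have hmm : c • S = m := by
    have hr : (r : ℝ) • S = ((r : ℂ)) • S := by
      rw [← smul_one_smul ℂ r S]; norm_num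
    calc c • S = Complex.I • S - ((r : ℂ)) • S := by rw [hc_def, sub_smul]
      _ = ((r : ℝ) • S + m) - (r : ℝ) • S := by rw [heq, hr]
      _ = m := by abel
  have hs2 : S = c⁻¹ • m := by
    rw [← hmm, smul_smul, inv_mul_cancel₀ hcne, one_smul]
  have : S ∈ Mset J S := by
    nth_rewrite 2 [hs2]
    exact Mset_smul hJ c⁻¹ hm
  exact P_of_S_mem_Nset hJ (Mset_subset_Nset hJ this)

theorem P_of_d (hJ : IsBHIdeal J) (hd : genBH {S} = JGen J {S}) :
    S ∈ Fset J S := by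
  rw [genBH_eq, JGen_eq hJ] at hd
  exact P_of_S_mem_Nset hJ (hd ▸ S_mem_Eset)

theorem P_of_e (hJ : IsBHIdeal J)
    (he : ∃ (m : ℕ), ∃ A ∈ J, ∃ B ∈ J, ∃ (C D : Fin m → (H →L[ℂ] H)),
      (∀ i, C i ∈ J ∧ D i ∈ J) ∧ S = A * S + S * B + ∑ i, C i * S * D i) :
    S ∈ Fset J S := by
  obtain ⟨m, A, hA, B, hB, C, D, hCD, heq⟩ := he
  have hY : (∑ i, C i * S * D i) ∈ Fset J S :=
    sum_mem_finSums _ _ (fun i _ => mem_finSums_of_mem ⟨C i, D i, (hCD i).1, (hCD i).2, rfl⟩)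
  have : S ∈ Mset J S := ⟨A, hA, B, hB, _, hY, heq⟩
  exact P_of_S_mem_Nset hJ (Mset_subset_Nset hJ this)

-- each condition from P
theorem a_of_P (hJ : IsBHIdeal J) (hS : S ∈ J) (hP : S ∈ Fset J S) :
    IsBHIdeal (genLin J {S}) := by
  rw [genLin_eq hJ hS, GLset_eq_Fset_of_P hJ hP]
  exact isBHIdeal_Fset hJ

theorem b_of_P (hJ : IsBHIdeal J) (hS : S ∈ J) (hP : S ∈ Fset J S) :
    IsBHIdeal (genSub J {S}) := by
  rw [genSub_eq hJ hS, GZset_eq_Fset_of_P hJ hP]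
  exact isBHIdeal_Fset hJ

theorem c_of_P (hJ : IsBHIdeal J) (hS : S ∈ J) (hP : S ∈ Fset J S) :
    IsBHIdeal (genReal J {S}) := by
  rw [genReal_eq hJ hS, GRset_eq_Fset_of_P hJ hP]
  exact isBHIdeal_Fset hJ

theorem d_of_P (hJ : IsBHIdeal J) (hP : S ∈ Fset J S) :
    genBH {S} = JGen J {S} := by
  rw [genBH_eq, JGen_eq hJ, Eset_eq_Fset_of_P hJ hP, Nset_eq_Fset_of_P hJ hP]

theorem e_of_P (hJ : IsBHIdeal J) (hP : S ∈ Fset J S) :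
    ∃ (m : ℕ), ∃ A ∈ J, ∃ B ∈ J, ∃ (C D : Fin m → (H →L[ℂ] H)),
      (∀ i, C i ∈ J ∧ D i ∈ J) ∧ S = A * S + S * B + ∑ i, C i * S * D i := by
  obtain ⟨n, f, hf, hsum⟩ := hP
  refine ⟨n, 0, ?_, 0, ?_, fun i => (hf i).choose, fun i => ((hf i).choose_spec).choose,
    fun i => ⟨((hf i).choose_spec).choose_spec.1, ((hf i).choose_spec).choose_spec.2.1⟩, ?_⟩
  · exact hJ.1
  · exact hJ.1
  · rw [zero_mul, mul_zero, zero_add, zero_add]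
    conv_lhs => rw [hsum]
    exact Finset.sum_congr rfl (fun i _ => ((hf i).choose_spec).choose_spec.2.2)

end Assemble
end Stmt3Aux

/-- equivalent conditions for a principal `J`-ideal to be a `B(H)`-ideal. -/
theorem stmt_3 (J : Set (H →L[ℂ] H)) (hJ : IsBHIdeal J)
    (S : H →L[ℂ] H) (hS : S ∈ J) :
    (IsBHIdeal (genLin J {S}) ↔ IsBHIdeal (genSub J {S})) ∧
    (IsBHIdeal (genLin J {S}) ↔ IsBHIdeal (genReal J {S})) ∧
    (IsBHIdeal (genLin J {S}) ↔ genBH {S} = JGen J {S}) ∧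
    (IsBHIdeal (genLin J {S}) ↔
      ∃ (m : ℕ), ∃ A ∈ J, ∃ B ∈ J, ∃ (C D : Fin m → (H →L[ℂ] H)),
        (∀ i, C i ∈ J ∧ D i ∈ J) ∧ S = A * S + S * B + ∑ i, C i * S * D i) := by
  refine ⟨⟨fun ha => ?_, fun hb => ?_⟩, ⟨fun ha => ?_, fun hc => ?_⟩,
    ⟨fun ha => ?_, fun hd => ?_⟩, ⟨fun ha => ?_, fun he => ?_⟩⟩
  · exact Stmt3Aux.b_of_P hJ hS (Stmt3Aux.P_of_a hJ hS ha)
  · exact Stmt3Aux.a_of_P hJ hS (Stmt3Aux.P_of_b hJ hS hb)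
  · exact Stmt3Aux.c_of_P hJ hS (Stmt3Aux.P_of_a hJ hS ha)
  · exact Stmt3Aux.a_of_P hJ hS (Stmt3Aux.P_of_c hJ hS hc)
  · exact Stmt3Aux.d_of_P hJ (Stmt3Aux.P_of_a hJ hS ha)
  · exact Stmt3Aux.a_of_P hJ hS (Stmt3Aux.P_of_d hJ hd)
  · exact Stmt3Aux.e_of_P hJ (Stmt3Aux.P_of_a hJ hS ha)
  · exact Stmt3Aux.a_of_P hJ hS (Stmt3Aux.P_of_e hJ he)
end

section
/- Let J be a B(H)-ideal and S ∈ J. Then J(S)J ⊆ JS + SJ + J(S)J ⊆ ⟨S⟩_J ⊆ (S)_J^ℝ ⊆ (S)_J ⊆ (S). Moreover, J(S)J is a B(H)-ideal and JS + SJ + J(S)J is a J-ideal. -/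
open scoped BigOperators
open TopologicalSpace

variable {H : Type*} [NormedAddCommGroup H] [InnerProductSpace ℂ H] [CompleteSpace H]

section Aux

variable {H : Type*} [NormedAddCommGroup H] [InnerProductSpace ℂ H] [CompleteSpace H]

lemma mem_genBH_self_s4 (S : H →L[ℂ] H) : S ∈ genBH {S} := by
  intro I hI
  exact hI.2 rfl

lemma genBH_mul_mem {J I : Set (H →L[ℂ] H)} (hJ : IsBHIdeal J)
    (hI : IsSubideal J I) {S : H →L[ℂ] H} (hSI : S ∈ I)
    {X : H →L[ℂ] H} (hX : X ∈ genBH {S}) :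
    ∀ A ∈ J, ∀ B ∈ J, A * X * B ∈ I := by
  have key : X ∈ {X : H →L[ℂ] H | ∀ A ∈ J, ∀ B ∈ J, A * X * B ∈ I} := by
    apply hX
    refine ⟨⟨?_, ?_, ?_, ?_⟩, ?_⟩
    · intro A _ B _
      simpa using hI.2.1
    · intro x hx y hy A hA B hB
      have := hI.2.2.1 _ (hx A hA B hB) _ (hy A hA B hB)
      simpa [mul_add, add_mul] using this
    · intro x hx A hA B hB
      have := hI.2.2.2.1 _ (hx A hA B hB)
      simpa [mul_neg, neg_mul] using this
    · intro C x hx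
      constructor
      · intro A hA B hB
        have hAC : A * C ∈ J := (hJ.2.2.2 C A hA).2
        have := hx (A * C) hAC B hB
        simpa [mul_assoc] using this
      · intro A hA B hB
        have hCB : C * B ∈ J := (hJ.2.2.2 C B hB).1
        have := hx A hA (C * B) hCB
        simpa [mul_assoc] using this
    · intro x hx A hA B hB
      rw [Set.mem_singleton_iff] at hx
      rw [hx]
      have h1 : A * S ∈ I := (hI.2.2.2.2 A hA S hSI).1
      exact (hI.2.2.2.2 B hB (A * S) h1).2
  exact key

lemma JGenJ_subset_genSub {J : Set (H →L[ℂ] H)} (hJ : IsBHIdeal J)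
    {I : Set (H →L[ℂ] H)} (hI : IsSubideal J I) {S : H →L[ℂ] H} (hSI : S ∈ I) :
    JGenJ J {S} ⊆ I := by
  rintro T ⟨n, A, X, B, hmem, rfl⟩
  apply Finset.sum_induction _ (· ∈ I) (fun a b ha hb => hI.2.2.1 a ha b hb) hI.2.1
  intro i _
  exact genBH_mul_mem hJ hI hSI (hmem i).2.1 (A i) (hmem i).1 (B i) (hmem i).2.2

lemma JGenJ_zero (J : Set (H →L[ℂ] H)) (S : H →L[ℂ] H) :
    (0 : H →L[ℂ] H) ∈ JGenJ J {S} :=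
  ⟨0, ![], ![], ![], fun i => i.elim0, by simp⟩

lemma JGenJ_add {J : Set (H →L[ℂ] H)} {S x y : H →L[ℂ] H}
    (hx : x ∈ JGenJ J {S}) (hy : y ∈ JGenJ J {S}) : x + y ∈ JGenJ J {S} := by
  obtain ⟨n, A, X, B, hmem, rfl⟩ := hx
  obtain ⟨m, A', X', B', hmem', rfl⟩ := hy
  refine ⟨n + m, Fin.append A A', Fin.append X X', Fin.append B B', ?_, ?_⟩
  · intro i
    rcases Nat.lt_or_ge (i : ℕ) n with h | h
    · have : i = Fin.castAdd m ⟨i, h⟩ := by ext; simp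
      rw [this]
      simp only [Fin.append_left]
      exact hmem _
    · have : i = Fin.natAdd n ⟨i - n, by omega⟩ := by ext; simp; omega
      rw [this]
      simp only [Fin.append_right]
      exact hmem' _
  · rw [Fin.sum_univ_add]
    simp [Fin.append_left, Fin.append_right]

lemma JGenJ_neg {J : Set (H →L[ℂ] H)} (hJ : IsBHIdeal J) {S x : H →L[ℂ] H}
    (hx : x ∈ JGenJ J {S}) : -x ∈ JGenJ J {S} := by
  obtain ⟨n, A, X, B, hmem, rfl⟩ := hx
  refine ⟨n, fun i => -A i, X, B, ?_, ?_⟩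
  · exact fun i => ⟨hJ.2.2.1 _ (hmem i).1, (hmem i).2⟩
  · simp [neg_mul, Finset.sum_neg_distrib]

lemma JGenJ_mul {J : Set (H →L[ℂ] H)} (hJ : IsBHIdeal J) (C : H →L[ℂ] H)
    {S x : H →L[ℂ] H} (hx : x ∈ JGenJ J {S}) :
    C * x ∈ JGenJ J {S} ∧ x * C ∈ JGenJ J {S} := by
  obtain ⟨n, A, X, B, hmem, rfl⟩ := hx
  constructor
  · refine ⟨n, fun i => C * A i, X, B, ?_, ?_⟩
    · exact fun i => ⟨(hJ.2.2.2 C _ (hmem i).1).1, (hmem i).2⟩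
    · rw [Finset.mul_sum]
      simp [mul_assoc]
  · refine ⟨n, A, X, fun i => B i * C, ?_, ?_⟩
    · exact fun i => ⟨(hmem i).1, (hmem i).2.1, (hJ.2.2.2 C _ (hmem i).2.2).2⟩
    · rw [Finset.sum_mul]
      simp [mul_assoc]

lemma JGenJ_single {J : Set (H →L[ℂ] H)} {S A X B : H →L[ℂ] H}
    (hA : A ∈ J) (hX : X ∈ genBH {S}) (hB : B ∈ J) :
    A * X * B ∈ JGenJ J {S} :=
  ⟨1, ![A], ![X], ![B], fun i => by fin_cases i <;> exact ⟨hA, hX, hB⟩, by simp⟩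

lemma JGenJ_isBHIdeal {J : Set (H →L[ℂ] H)} (hJ : IsBHIdeal J) (S : H →L[ℂ] H) :
    IsBHIdeal (JGenJ J {S}) :=
  ⟨JGenJ_zero J S, fun x hx y hy => JGenJ_add hx hy, fun x hx => JGenJ_neg hJ hx,
    fun C x hx => JGenJ_mul hJ C hx⟩

lemma JGenJ_subset {J : Set (H →L[ℂ] H)} (hJ : IsBHIdeal J) (S : H →L[ℂ] H) :
    JGenJ J {S} ⊆ J := by
  rintro T ⟨n, A, X, B, hmem, rfl⟩
  apply Finset.sum_induction _ (· ∈ J) (fun a b ha hb => hJ.2.1 a ha b hb) hJ.1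
  intro i _
  exact (hJ.2.2.2 (B i) _ ((hJ.2.2.2 (X i) _ (hmem i).1).2)).2

end Aux

/-- the inclusion chain
`J(S)J ⊆ JS + SJ + J(S)J ⊆ ⟨S⟩_J ⊆ (S)_J^ℝ ⊆ (S)_J ⊆ (S)`, with `J(S)J` a
`B(H)`-ideal and `JS + SJ + J(S)J` a `J`-ideal. -/
theorem stmt_4 (J : Set (H →L[ℂ] H)) (hJ : IsBHIdeal J)
    (S : H →L[ℂ] H) (hS : S ∈ J) :
    JGenJ J {S} ⊆ JSplus J S ∧
    JSplus J S ⊆ genSub J {S} ∧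
    genSub J {S} ⊆ genReal J {S} ∧
    genReal J {S} ⊆ genLin J {S} ∧
    genLin J {S} ⊆ genBH {S} ∧
    IsBHIdeal (JGenJ J {S}) ∧
    IsSubideal J (JSplus J S) := by
  obtain ⟨hz, hadd, hneg, hmul⟩ := hJ
  have hJ' : IsBHIdeal J := ⟨hz, hadd, hneg, hmul⟩
  have hSgen : S ∈ genBH {S} := mem_genBH_self_s4 S
  -- JSplus is a subideal
  have hsub : IsSubideal J (JSplus J S) := by
    refine ⟨?_, ?_, ?_, ?_, ?_⟩
    · rintro T ⟨A, hA, B, hB, Y, hY, rfl⟩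
      have h1 : A * S ∈ J := (hmul S A hA).2
      have h2 : S * B ∈ J := (hmul S B hB).1
      exact hadd _ (hadd _ h1 _ h2) _ (JGenJ_subset hJ' S hY)
    · exact ⟨0, hz, 0, hz, 0, JGenJ_zero J S, by simp⟩
    · rintro x ⟨A, hA, B, hB, Y, hY, rfl⟩ y ⟨A', hA', B', hB', Y', hY', rfl⟩
      exact ⟨A + A', hadd _ hA _ hA', B + B', hadd _ hB _ hB',
        Y + Y', JGenJ_add hY hY', by noncomm_ring⟩
    · rintro x ⟨A, hA, B, hB, Y, hY, rfl⟩
      exact ⟨-A, hneg _ hA, -B, hneg _ hB, -Y, JGenJ_neg hJ' hY, by noncomm_ring⟩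
    · intro C hC x hx
      obtain ⟨A, hA, B, hB, Y, hY, rfl⟩ := hx
      constructor
      · refine ⟨C * A, (hmul A C hC).2, 0, hz,
          C * S * B + C * Y, JGenJ_add (JGenJ_single hC hSgen hB) (JGenJ_mul hJ' C hY).1,
          by noncomm_ring⟩
      · refine ⟨0, hz, B * C, (hmul C B hB).2,
          A * S * C + Y * C, JGenJ_add (JGenJ_single hA hSgen hC) (JGenJ_mul hJ' C hY).2,
          by noncomm_ring⟩
  refine ⟨?_, ?_, ?_, ?_, ?_, JGenJ_isBHIdeal hJ' S, hsub⟩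
  · intro Y hY
    exact ⟨0, hz, 0, hz, Y, hY, by simp⟩
  · intro T hT
    intro I hI
    obtain ⟨hI1, hI2⟩ := hI
    have hSI : S ∈ I := hI2 rfl
    obtain ⟨A, hA, B, hB, Y, hY, rfl⟩ := hT
    have h1 : A * S ∈ I := (hI1.2.2.2.2 A hA S hSI).1
    have h2 : S * B ∈ I := (hI1.2.2.2.2 B hB S hSI).2
    exact hI1.2.2.1 _ (hI1.2.2.1 _ h1 _ h2) _ (JGenJ_subset_genSub hJ' hI1 hSI hY)
  · intro T hT I hI
    exact hT I ⟨hI.1.1, hI.2⟩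
  · intro T hT I hI
    have hreal : IsRealSubideal J I := ⟨hI.1.1, fun r x hx => by
      have := hI.1.2 (r : ℂ) x hx
      rwa [show ((r : ℂ) • x) = r • x from algebraMap_smul ℂ r x] at this⟩
    exact hT I ⟨hreal, hI.2⟩
  · intro T hT I hI
    obtain ⟨hIideal, hSI⟩ := hI
    have hlin : IsLinearSubideal (H := H) J (I ∩ J) := by
      refine ⟨⟨fun x hx => hx.2, ⟨hIideal.1, hz⟩, ?_, ?_, ?_⟩, ?_⟩
      · exact fun x hx y hy => ⟨hIideal.2.1 _ hx.1 _ hy.1, hadd _ hx.2 _ hy.2⟩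
      · exact fun x hx => ⟨hIideal.2.2.1 _ hx.1, hneg _ hx.2⟩
      · intro A hA x hx
        exact ⟨⟨(hIideal.2.2.2 A x hx.1).1, (hmul A x hx.2).1⟩,
          ⟨(hIideal.2.2.2 A x hx.1).2, (hmul A x hx.2).2⟩⟩
      · intro c x hx
        have h1 : c • x = (c • (1 : H →L[ℂ] H)) * x := by
          rw [smul_mul_assoc, one_mul]
        rw [h1]
        exact ⟨(hIideal.2.2.2 _ x hx.1).1, (hmul _ x hx.2).1⟩
    have := hT (I ∩ J) ⟨hlin, fun x hx => ⟨hSI hx, by simp_all⟩⟩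
    exact this.1
end

section
/- There exist a B(H)-ideal J and an operator S ∈ J such that J(S)J is a proper subset of JS + SJ + J(S)J; specifically, there exists A ∈ J with AS ∉ J(S)J. (Such an example is S the diagonal operator with singular values ⟨1/n⟩ and J = (S).) -/
set_option linter.unusedSectionVars false


open scoped BigOperators
open TopologicalSpace

variable {H : Type*} [NormedAddCommGroup H] [InnerProductSpace ℂ H] [CompleteSpace H]

noncomputable section
namespace Stmt9
open scoped ComplexConjugate ENNReal NNReal

variable {H : Type*} [NormedAddCommGroup H] [InnerProductSpace ℂ H] [CompleteSpace H]

/-- rank of `F` is at most `n`. -/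
def RankLE (n : ℕ) (F : H →L[ℂ] H) : Prop :=
  ∃ p : Submodule ℂ H, FiniteDimensional ℂ p ∧ Module.finrank ℂ p ≤ n ∧
    LinearMap.range (F : H →ₗ[ℂ] H) ≤ p

lemma rankLE_zero (n : ℕ) : RankLE n (0 : H →L[ℂ] H) :=
  ⟨⊥, inferInstance, by simp, by simp⟩

lemma RankLE.mono {n m : ℕ} (h : n ≤ m) {F : H →L[ℂ] H} (hF : RankLE n F) : RankLE m F := by
  obtain ⟨p, h1, h2, h3⟩ := hF; exact ⟨p, h1, h2.trans h, h3⟩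

lemma RankLE.add {n m : ℕ} {F G : H →L[ℂ] H} (hF : RankLE n F) (hG : RankLE m G) :
    RankLE (n + m) (F + G) := by
  obtain ⟨p, hp1, hp2, hp3⟩ := hF
  obtain ⟨q, hq1, hq2, hq3⟩ := hG
  refine ⟨p ⊔ q, inferInstance, ?_, ?_⟩
  · exact (Submodule.finrank_add_le_finrank_add_finrank p q).trans (add_le_add hp2 hq2)
  · rintro x ⟨y, rfl⟩
    exact Submodule.add_mem_sup (hp3 ⟨y, rfl⟩) (hq3 ⟨y, rfl⟩)

lemma RankLE.neg {n : ℕ} {F : H →L[ℂ] H} (hF : RankLE n F) : RankLE n (-F) := by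
  obtain ⟨p, h1, h2, h3⟩ := hF
  refine ⟨p, h1, h2, ?_⟩
  rintro x ⟨y, rfl⟩
  have : ((-F : H →L[ℂ] H) : H →ₗ[ℂ] H) y = -(F y) := by simp
  rw [this]
  exact p.neg_mem (h3 ⟨y, rfl⟩)

lemma RankLE.comp_left {n : ℕ} {F : H →L[ℂ] H} (A : H →L[ℂ] H) (hF : RankLE n F) :
    RankLE n (A * F) := by
  obtain ⟨p, h1, h2, h3⟩ := hF
  refine ⟨p.map (A : H →ₗ[ℂ] H), inferInstance, ?_, ?_⟩
  · exact (Submodule.finrank_map_le _ _).trans h2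
  · rintro x ⟨y, rfl⟩
    exact ⟨F y, h3 ⟨y, rfl⟩, rfl⟩

lemma RankLE.comp_right {n : ℕ} {F : H →L[ℂ] H} (A : H →L[ℂ] H) (hF : RankLE n F) :
    RankLE n (F * A) := by
  obtain ⟨p, h1, h2, h3⟩ := hF
  exact ⟨p, h1, h2, by rintro x ⟨y, rfl⟩; exact h3 ⟨A y, rfl⟩⟩

/-- the set of approximation errors by rank `≤ n` operators -/
def apprSet (n : ℕ) (T : H →L[ℂ] H) : Set ℝ := {r | ∃ F, RankLE n F ∧ r = ‖T - F‖}

lemma apprSet_nonempty (n : ℕ) (T : H →L[ℂ] H) : (apprSet n T).Nonempty :=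
  ⟨‖T - 0‖, 0, rankLE_zero n, rfl⟩

lemma apprSet_bddBelow (n : ℕ) (T : H →L[ℂ] H) : BddBelow (apprSet n T) :=
  ⟨0, by rintro r ⟨F, _, rfl⟩; exact norm_nonneg _⟩

/-- `n`-th approximation number -/
def appr (n : ℕ) (T : H →L[ℂ] H) : ℝ := sInf (apprSet n T)

lemma appr_nonneg (n : ℕ) (T : H →L[ℂ] H) : 0 ≤ appr n T :=
  le_csInf (apprSet_nonempty n T) (by rintro r ⟨F, _, rfl⟩; exact norm_nonneg _)

lemma appr_le {n : ℕ} {F : H →L[ℂ] H} (T : H →L[ℂ] H) (hF : RankLE n F) :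
    appr n T ≤ ‖T - F‖ :=
  csInf_le (apprSet_bddBelow n T) ⟨F, hF, rfl⟩

lemma appr_le_norm (n : ℕ) (T : H →L[ℂ] H) : appr n T ≤ ‖T‖ := by
  simpa using appr_le T (rankLE_zero n)

lemma le_appr {n : ℕ} {T : H →L[ℂ] H} {c : ℝ}
    (h : ∀ F : H →L[ℂ] H, RankLE n F → c ≤ ‖T - F‖) : c ≤ appr n T :=
  le_csInf (apprSet_nonempty n T) (by rintro r ⟨F, hF, rfl⟩; exact h F hF)

lemma exists_appr (n : ℕ) (T : H →L[ℂ] H) {ε : ℝ} (hε : 0 < ε) :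
    ∃ F : H →L[ℂ] H, RankLE n F ∧ ‖T - F‖ < appr n T + ε := by
  obtain ⟨r, ⟨F, hF, rfl⟩, hr⟩ :=
    exists_lt_of_csInf_lt (apprSet_nonempty n T) (lt_add_of_pos_right _ hε)
  exact ⟨F, hF, hr⟩

lemma appr_antitone {n m : ℕ} (h : n ≤ m) (T : H →L[ℂ] H) : appr m T ≤ appr n T := by
  apply csInf_le_csInf (apprSet_bddBelow m T) (apprSet_nonempty n T)
  rintro r ⟨F, hF, rfl⟩
  exact ⟨F, hF.mono h, rfl⟩

lemma appr_add (n m : ℕ) (T U : H →L[ℂ] H) :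
    appr (n + m) (T + U) ≤ appr n T + appr m U := by
  refine le_of_forall_pos_le_add fun ε hε => ?_
  obtain ⟨F, hF, hF2⟩ := exists_appr n T (half_pos hε)
  obtain ⟨G, hG, hG2⟩ := exists_appr m U (half_pos hε)
  have h1 : appr (n + m) (T + U) ≤ ‖T + U - (F + G)‖ := appr_le _ (hF.add hG)
  have h2 : T + U - (F + G) = (T - F) + (U - G) := by abel
  calc appr (n + m) (T + U) ≤ ‖(T - F) + (U - G)‖ := by rwa [h2] at h1
    _ ≤ ‖T - F‖ + ‖U - G‖ := norm_add_le _ _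
    _ ≤ (appr n T + ε / 2) + (appr m U + ε / 2) := by linarith
    _ = appr n T + appr m U + ε := by ring

lemma appr_neg (n : ℕ) (T : H →L[ℂ] H) : appr n (-T) ≤ appr n T := by
  refine le_of_forall_pos_le_add fun ε hε => ?_
  obtain ⟨F, hF, hF2⟩ := exists_appr n T hε
  have h1 : appr n (-T) ≤ ‖-T - (-F)‖ := appr_le _ hF.neg
  have h2 : -T - (-F) = -(T - F) := by abel
  rw [h2, norm_neg] at h1
  linarith

lemma appr_mul (n m : ℕ) (T U : H →L[ℂ] H) :
    appr (n + m) (T * U) ≤ appr n T * appr m U := by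
  have key : ∀ ε : ℝ, 0 < ε → ε ≤ 1 →
      appr (n + m) (T * U) ≤ appr n T * appr m U + ε * (appr n T + appr m U + 1) := by
    intro ε hε hε1
    obtain ⟨F, hF, hF2⟩ := exists_appr n T hε
    obtain ⟨G, hG, hG2⟩ := exists_appr m U hε
    have hrank : RankLE (n + m) (F * U + (T - F) * G) :=
      (hF.comp_right U).add ((hG.comp_left (T - F)).mono le_rfl)
    have heq : T * U - (F * U + (T - F) * G) = (T - F) * (U - G) := by
      simp only [mul_sub, sub_mul]; abel
    have h1 : appr (n + m) (T * U) ≤ ‖(T - F) * (U - G)‖ := by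
      have := appr_le (T * U) hrank; rwa [heq] at this
    have h2 : ‖(T - F) * (U - G)‖ ≤ ‖T - F‖ * ‖U - G‖ := norm_mul_le _ _
    have hT0 := appr_nonneg n T
    have hU0 := appr_nonneg m U
    have hTF : (0:ℝ) ≤ ‖T - F‖ := norm_nonneg _
    have hUG : (0:ℝ) ≤ ‖U - G‖ := norm_nonneg _
    nlinarith [mul_le_mul hF2.le hG2.le hUG (by linarith : (0:ℝ) ≤ appr n T + ε)]
  refine le_of_forall_pos_le_add fun δ hδ => ?_
  have hT0 := appr_nonneg n T
  have hU0 := appr_nonneg m U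
  set M := appr n T + appr m U + 1 with hM
  have hM0 : 0 < M := by positivity
  set ε := min 1 (δ / M) with hεdef
  have hε : 0 < ε := lt_min one_pos (div_pos hδ hM0)
  have := key ε hε (min_le_left _ _)
  have hεM : ε * M ≤ δ := by
    calc ε * M ≤ (δ / M) * M := by
          exact mul_le_mul_of_nonneg_right (min_le_right _ _) hM0.le
    _ = δ := by field_simp
  linarith

lemma appr_comp_left (n : ℕ) (A T : H →L[ℂ] H) : appr n (A * T) ≤ ‖A‖ * appr n T := by
  refine le_of_forall_pos_le_add fun ε hε => ?_
  have hA : (0:ℝ) ≤ ‖A‖ := norm_nonneg _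
  have hpos : (0:ℝ) < ε / (‖A‖ + 1) := div_pos hε (by linarith)
  obtain ⟨F, hF, hF2⟩ := exists_appr n T hpos
  have h1 : appr n (A * T) ≤ ‖A * T - A * F‖ := appr_le _ (hF.comp_left A)
  have h2 : ‖A * T - A * F‖ ≤ ‖A‖ * ‖T - F‖ := by
    rw [← mul_sub]; exact norm_mul_le _ _
  have h3 : ‖A‖ * ‖T - F‖ ≤ ‖A‖ * (appr n T + ε / (‖A‖ + 1)) :=
    mul_le_mul_of_nonneg_left hF2.le hA
  have h4 : ‖A‖ * (ε / (‖A‖ + 1)) ≤ ε := by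
    rw [mul_div_assoc', div_le_iff₀ (by linarith : (0:ℝ) < ‖A‖ + 1)]
    nlinarith [hA, hε.le]
  have h5 : ‖A‖ * (appr n T + ε / (‖A‖ + 1)) = ‖A‖ * appr n T + ‖A‖ * (ε / (‖A‖ + 1)) := by ring
  linarith

lemma appr_comp_right (n : ℕ) (A T : H →L[ℂ] H) : appr n (T * A) ≤ appr n T * ‖A‖ := by
  refine le_of_forall_pos_le_add fun ε hε => ?_
  have hA : (0:ℝ) ≤ ‖A‖ := norm_nonneg _
  have hpos : (0:ℝ) < ε / (‖A‖ + 1) := div_pos hε (by linarith)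
  obtain ⟨F, hF, hF2⟩ := exists_appr n T hpos
  have h1 : appr n (T * A) ≤ ‖T * A - F * A‖ := appr_le _ (hF.comp_right A)
  have h2 : ‖T * A - F * A‖ ≤ ‖T - F‖ * ‖A‖ := by
    rw [← sub_mul]; exact norm_mul_le _ _
  have h3 : ‖T - F‖ * ‖A‖ ≤ (appr n T + ε / (‖A‖ + 1)) * ‖A‖ :=
    mul_le_mul_of_nonneg_right hF2.le hA
  have h4 : (ε / (‖A‖ + 1)) * ‖A‖ ≤ ε := by
    rw [div_mul_eq_mul_div, div_le_iff₀ (by linarith : (0:ℝ) < ‖A‖ + 1)]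
    nlinarith [hA, hε.le]
  have h5 : (appr n T + ε / (‖A‖ + 1)) * ‖A‖ = appr n T * ‖A‖ + (ε / (‖A‖ + 1)) * ‖A‖ := by ring
  linarith

lemma appr_sum (m : ℕ) : ∀ (k : ℕ) (T : Fin k → (H →L[ℂ] H)),
    appr (k * m) (∑ i, T i) ≤ ∑ i, appr m (T i) := by
  intro k
  induction k with
  | zero => intro T; simpa using appr_le (0 : H →L[ℂ] H) (rankLE_zero 0)
  | succ k ih =>
    intro T
    rw [Fin.sum_univ_castSucc (f := T), Fin.sum_univ_castSucc (f := fun i => appr m (T i))]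
    calc appr ((k + 1) * m) (∑ i : Fin k, T i.castSucc + T (Fin.last k))
        ≤ appr (k * m + m) (∑ i : Fin k, T i.castSucc + T (Fin.last k)) := by
          apply appr_antitone; rw [add_mul, one_mul]
      _ ≤ appr (k * m) (∑ i : Fin k, T i.castSucc) + appr m (T (Fin.last k)) := appr_add _ _ _ _
      _ ≤ ∑ i : Fin k, appr m (T i.castSucc) + appr m (T (Fin.last k)) := by
          have := ih (fun i => T i.castSucc); linarith


/-- The candidate ideal: operators with approximation numbers `O(1/n)`. -/
def Jid : Set (H →L[ℂ] H) := {T | ∃ C : ℝ, ∀ n : ℕ, appr n T ≤ C / (n + 1)}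

lemma Jid_const_nonneg {T : H →L[ℂ] H} {C : ℝ} (h : ∀ n : ℕ, appr n T ≤ C / (n + 1)) :
    0 ≤ C := by
  have h0 := (appr_nonneg 0 T).trans (h 0)
  norm_num at h0
  exact h0

lemma Jid_isBHIdeal : IsBHIdeal (Jid (H := H)) := by
  refine ⟨⟨0, fun n => ?_⟩, ?_, ?_, ?_⟩
  · have h := appr_le (0 : H →L[ℂ] H) (rankLE_zero n)
    have h2 : ‖(0 : H →L[ℂ] H) - 0‖ = 0 := by simp
    rw [h2] at h
    rw [zero_div]
    exact h
  · rintro x ⟨Cx, hx⟩ y ⟨Cy, hy⟩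
    have hCx := Jid_const_nonneg hx
    have hCy := Jid_const_nonneg hy
    refine ⟨2 * (Cx + Cy), fun n => ?_⟩
    have hhalf : n / 2 + n / 2 ≤ n := by omega
    have h1 : appr n (x + y) ≤ appr (n / 2 + n / 2) (x + y) := appr_antitone hhalf _
    have h2 := appr_add (n / 2) (n / 2) x y
    have h3 := hx (n / 2)
    have h4 := hy (n / 2)
    have hc : (n : ℝ) ≤ 2 * (n / 2 : ℕ) + 1 := by
      exact_mod_cast (by omega : n ≤ 2 * (n / 2) + 1)
    have hp1 : (0:ℝ) < (n / 2 : ℕ) + 1 := by positivity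
    have hp2 : (0:ℝ) < (n : ℝ) + 1 := by positivity
    have h5 : (Cx + Cy) / ((n / 2 : ℕ) + 1) ≤ 2 * (Cx + Cy) / ((n : ℝ) + 1) := by
      rw [div_le_div_iff₀ hp1 hp2]
      nlinarith
    calc appr n (x + y) ≤ appr (n / 2) x + appr (n / 2) y := h1.trans h2
      _ ≤ Cx / ((n / 2 : ℕ) + 1) + Cy / ((n / 2 : ℕ) + 1) := add_le_add h3 h4
      _ = (Cx + Cy) / ((n / 2 : ℕ) + 1) := by rw [← add_div]
      _ ≤ 2 * (Cx + Cy) / ((n : ℝ) + 1) := h5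
  · rintro x ⟨Cx, hx⟩
    exact ⟨Cx, fun n => (appr_neg n x).trans (hx n)⟩
  · rintro A x ⟨Cx, hx⟩
    constructor
    · refine ⟨‖A‖ * Cx, fun n => ?_⟩
      calc appr n (A * x) ≤ ‖A‖ * appr n x := appr_comp_left n A x
        _ ≤ ‖A‖ * (Cx / (n + 1)) := mul_le_mul_of_nonneg_left (hx n) (norm_nonneg A)
        _ = ‖A‖ * Cx / (n + 1) := by ring
    · refine ⟨Cx * ‖A‖, fun n => ?_⟩
      calc appr n (x * A) ≤ appr n x * ‖A‖ := appr_comp_right n A x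
        _ ≤ (Cx / (n + 1)) * ‖A‖ := mul_le_mul_of_nonneg_right (hx n) (norm_nonneg A)
        _ = Cx * ‖A‖ / (n + 1) := by ring

lemma genBH_subset {J : Set (H →L[ℂ] H)} (hJ : IsBHIdeal J) {S : H →L[ℂ] H} (hS : S ∈ J) :
    genBH {S} ⊆ J :=
  Set.sInter_subset_of_mem ⟨hJ, Set.singleton_subset_iff.2 hS⟩

/-- Main negative result: if `S*S` has approximation numbers bounded below by `1/(m+1)^2`,
then `S*S ∉ J(S)J` for `J = Jid`. -/
lemma not_mem_JGenJ {S : H →L[ℂ] H} (hS : S ∈ Jid)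
    (hlow : ∀ m : ℕ, 1 / ((m : ℝ) + 1) ^ 2 ≤ appr m (S * S)) :
    S * S ∉ JGenJ Jid {S} := by
  rintro ⟨k, A, X, B, hmem, hsum⟩
  have hXJ : ∀ i, X i ∈ Jid := fun i => genBH_subset Jid_isBHIdeal hS (hmem i).2.1
  choose CA hCA using fun i => (hmem i).1
  choose CX hCX using hXJ
  choose CB hCB using fun i => (hmem i).2.2
  have hCA0 : ∀ i, 0 ≤ CA i := fun i => Jid_const_nonneg (hCA i)
  have hCX0 : ∀ i, 0 ≤ CX i := fun i => Jid_const_nonneg (hCX i)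
  have hCB0 : ∀ i, 0 ≤ CB i := fun i => Jid_const_nonneg (hCB i)
  set D : ℝ := ∑ i, CA i * CX i * CB i with hD
  have hD0 : 0 ≤ D := Finset.sum_nonneg fun i _ =>
    mul_nonneg (mul_nonneg (hCA0 i) (hCX0 i)) (hCB0 i)
  have key : ∀ n : ℕ, appr (k * (n + n + n)) (S * S) ≤ D / ((n : ℝ) + 1) ^ 3 := by
    intro n
    have hterm : ∀ i, appr (n + n + n) (A i * X i * B i) ≤
        CA i * CX i * CB i / ((n : ℝ) + 1) ^ 3 := by
      intro i
      have hp : (0:ℝ) < (n : ℝ) + 1 := by positivity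
      have t1 : appr (n + n) (A i * X i) ≤ appr n (A i) * appr n (X i) := appr_mul n n _ _
      have t2 : appr (n + n + n) (A i * X i * B i) ≤
          appr (n + n) (A i * X i) * appr n (B i) := appr_mul (n + n) n _ _
      have t3 : appr n (A i) * appr n (X i) ≤ (CA i / ((n:ℝ)+1)) * (CX i / ((n:ℝ)+1)) :=
        mul_le_mul (hCA i n) (hCX i n) (appr_nonneg _ _) (div_nonneg (hCA0 i) hp.le)
      have t4 : appr (n + n) (A i * X i) * appr n (B i) ≤
          ((CA i / ((n:ℝ)+1)) * (CX i / ((n:ℝ)+1))) * (CB i / ((n:ℝ)+1)) := by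
        exact mul_le_mul (t1.trans t3) (hCB i n) (appr_nonneg _ _)
          (mul_nonneg (div_nonneg (hCA0 i) hp.le) (div_nonneg (hCX0 i) hp.le))
      calc appr (n + n + n) (A i * X i * B i)
          ≤ ((CA i / ((n:ℝ)+1)) * (CX i / ((n:ℝ)+1))) * (CB i / ((n:ℝ)+1)) := t2.trans t4
        _ = CA i * CX i * CB i / ((n : ℝ) + 1) ^ 3 := by
            rw [div_mul_div_comm, div_mul_div_comm]; congr 1; ring
    calc appr (k * (n + n + n)) (S * S) = appr (k * (n + n + n)) (∑ i, A i * X i * B i) := by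
          rw [← hsum]
      _ ≤ ∑ i, appr (n + n + n) (A i * X i * B i) := appr_sum (n + n + n) k _
      _ ≤ ∑ i, CA i * CX i * CB i / ((n : ℝ) + 1) ^ 3 :=
          Finset.sum_le_sum fun i _ => hterm i
      _ = D / ((n : ℝ) + 1) ^ 3 := by rw [hD, Finset.sum_div]
  -- derive a contradiction
  set n : ℕ := ⌈9 * D * ((k : ℝ) + 1) ^ 2⌉₊ with hn
  have hceil : 9 * D * ((k : ℝ) + 1) ^ 2 ≤ (n : ℝ) := Nat.le_ceil _
  have h1 := hlow (k * (n + n + n))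
  have h2 := key n
  have hp : (0:ℝ) < (n : ℝ) + 1 := by positivity
  set M : ℕ := k * (n + n + n) with hM
  have hq : (0:ℝ) < (M : ℝ) + 1 := by positivity
  have hcross : ((n : ℝ) + 1) ^ 3 ≤ D * ((M : ℝ) + 1) ^ 2 := by
    have := h1.trans h2
    rw [div_le_div_iff₀ (by positivity) (by positivity)] at this
    nlinarith
  have hMle : (M : ℝ) + 1 ≤ 3 * ((k : ℝ) + 1) * ((n : ℝ) + 1) := by
    have : (M : ℝ) = (k : ℝ) * ((n : ℝ) + (n : ℝ) + (n : ℝ)) := by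
      rw [hM]; push_cast; ring
    rw [this]
    have hk0 : (0:ℝ) ≤ (k : ℝ) := Nat.cast_nonneg k
    have hn0 : (0:ℝ) ≤ (n : ℝ) := Nat.cast_nonneg n
    nlinarith
  have hsq : ((M : ℝ) + 1) ^ 2 ≤ 9 * ((k : ℝ) + 1) ^ 2 * ((n : ℝ) + 1) ^ 2 := by
    nlinarith [hq.le]
  have hfin : ((n : ℝ) + 1) ^ 3 ≤ 9 * D * ((k : ℝ) + 1) ^ 2 * ((n : ℝ) + 1) ^ 2 := by
    calc ((n : ℝ) + 1) ^ 3 ≤ D * ((M : ℝ) + 1) ^ 2 := hcross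
      _ ≤ D * (9 * ((k : ℝ) + 1) ^ 2 * ((n : ℝ) + 1) ^ 2) :=
          mul_le_mul_of_nonneg_left hsq hD0
      _ = 9 * D * ((k : ℝ) + 1) ^ 2 * ((n : ℝ) + 1) ^ 2 := by ring
  have hlast : (n : ℝ) + 1 ≤ 9 * D * ((k : ℝ) + 1) ^ 2 := by
    nlinarith
  linarith

local notation "⟪" x ", " y "⟫" => @inner ℂ _ _ x y


abbrev L2 : Type _ := lp (fun _ : ℕ => ℂ) 2

variable (e : ℕ → H) (he : Orthonormal ℂ e)

/-- isometric embedding of ℓ² into H along the orthonormal family `e` -/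
def Phi : L2 →ₗᵢ[ℂ] H := he.orthogonalFamily.linearIsometry

lemma phi_single (i : ℕ) (a : ℂ) : Phi e he (lp.single 2 i a) = a • e i := by
  rw [Phi, he.orthogonalFamily.linearIsometry_apply_single,
    LinearIsometry.toSpanSingleton_apply]

def PhiL : L2 →L[ℂ] H := (Phi e he).toContinuousLinearMap

lemma phiL_apply (f : L2) : PhiL e he f = Phi e he f := rfl

lemma norm_phiL (f : L2) : ‖PhiL e he f‖ = ‖f‖ := (Phi e he).norm_map f

def beta : H →L[ℂ] L2 := ContinuousLinearMap.adjoint (PhiL e he)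

lemma beta_apply (x : H) (i : ℕ) : beta e he x i = ⟪e i, x⟫ := by
  have h1 : ⟪lp.single 2 i (1:ℂ), beta e he x⟫ = ⟪PhiL e he (lp.single 2 i (1:ℂ)), x⟫ :=
    ContinuousLinearMap.adjoint_inner_right _ _ _
  rw [lp.inner_single_left] at h1
  rw [phiL_apply, phi_single, one_smul] at h1
  simpa using h1

lemma norm_beta_le (x : H) : ‖beta e he x‖ ≤ ‖x‖ := by
  have h1 : ‖PhiL e he‖ ≤ 1 :=
    ContinuousLinearMap.opNorm_le_bound _ zero_le_one fun f => by
      rw [norm_phiL, one_mul]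
  have h2 : ‖beta e he‖ ≤ 1 := by
    rw [beta, ContinuousLinearMap.adjoint.norm_map]
    exact h1
  calc ‖beta e he x‖ ≤ ‖beta e he‖ * ‖x‖ := (beta e he).le_opNorm x
    _ ≤ 1 * ‖x‖ := mul_le_mul_of_nonneg_right h2 (norm_nonneg x)
    _ = ‖x‖ := one_mul ‖x‖

lemma beta_e (k : ℕ) : beta e he (e k) = lp.single 2 k 1 := by
  apply lp.ext
  funext i
  rw [beta_apply]
  have hik := orthonormal_iff_ite.mp he i k
  rcases eq_or_ne i k with rfl | h
  · rw [lp.single_apply_self]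
    simpa using hik
  · rw [lp.single_apply_ne 2 k _ h]
    simpa [h] using hik

section diag

lemma two_toReal : ((2 : ℝ≥0∞)).toReal = 2 := by norm_num

lemma diag_memℓp (d : ℕ → ℂ) (c : ℝ) (hd : ∀ k, ‖d k‖ ≤ c) (f : L2) :
    Memℓp (fun k => d k * f k) 2 := by
  apply memℓp_gen
  have hc0 : 0 ≤ c := (norm_nonneg (d 0)).trans (hd 0)
  have hf : Summable fun k => ‖f k‖ ^ (2 : ℝ≥0∞).toReal :=
    (lp.memℓp f).summable (by norm_num)
  rw [two_toReal] at hf ⊢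
  apply Summable.of_nonneg_of_le (fun k => by positivity) _ (hf.mul_left (c ^ (2:ℝ)))
  intro k
  have h1 : ‖d k * f k‖ = ‖d k‖ * ‖f k‖ := norm_mul _ _
  rw [h1, Real.mul_rpow (norm_nonneg _) (norm_nonneg _)]
  exact mul_le_mul_of_nonneg_right
    (Real.rpow_le_rpow (norm_nonneg _) (hd k) (by norm_num)) (Real.rpow_nonneg (norm_nonneg _) _)

/-- the diagonal operator on ℓ² with diagonal `d`, bounded by `c` -/
def diagL (d : ℕ → ℂ) (c : ℝ) (hd : ∀ k, ‖d k‖ ≤ c) : L2 →L[ℂ] L2 :=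
  LinearMap.mkContinuous
    { toFun := fun f => (⟨fun k => d k * f k, diag_memℓp d c hd f⟩ : L2)
      map_add' := fun f g => by
        apply lp.ext
        funext k
        simp only [lp.coeFn_add, Pi.add_apply]
        exact mul_add _ _ _
      map_smul' := fun a f => by
        apply lp.ext
        funext k
        simp only [lp.coeFn_smul, Pi.smul_apply, RingHom.id_apply, smul_eq_mul]
        ring }
    c
    (by
      intro f
      have hc0 : 0 ≤ c := (norm_nonneg (d 0)).trans (hd 0)
      apply lp.norm_le_of_forall_sum_le (by rw [two_toReal]; norm_num)
        (mul_nonneg hc0 (norm_nonneg f))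
      intro s
      rw [two_toReal]
      have h1 : ∀ k ∈ s, ‖d k * f k‖ ^ (2:ℝ) ≤ c ^ (2:ℝ) * ‖f k‖ ^ (2:ℝ) := by
        intro k _
        rw [norm_mul, Real.mul_rpow (norm_nonneg _) (norm_nonneg _)]
        exact mul_le_mul_of_nonneg_right
          (Real.rpow_le_rpow (norm_nonneg _) (hd k) (by norm_num))
          (Real.rpow_nonneg (norm_nonneg _) _)
      calc (∑ k ∈ s, ‖d k * f k‖ ^ (2:ℝ))
          ≤ ∑ k ∈ s, c ^ (2:ℝ) * ‖f k‖ ^ (2:ℝ) := Finset.sum_le_sum h1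
        _ = c ^ (2:ℝ) * ∑ k ∈ s, ‖f k‖ ^ (2:ℝ) := by rw [Finset.mul_sum]
        _ ≤ c ^ (2:ℝ) * ‖f‖ ^ (2:ℝ) := by
            apply mul_le_mul_of_nonneg_left _ (Real.rpow_nonneg hc0 _)
            have := lp.sum_rpow_le_norm_rpow (by rw [two_toReal]; norm_num : 0 < (2:ℝ≥0∞).toReal) f s
            rwa [two_toReal] at this
        _ = (c * ‖f‖) ^ (2:ℝ) := (Real.mul_rpow hc0 (norm_nonneg f)).symm)

lemma diagL_apply (d : ℕ → ℂ) (c : ℝ) (hd : ∀ k, ‖d k‖ ≤ c) (f : L2) (k : ℕ) :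
    diagL d c hd f k = d k * f k := rfl

lemma diagL_norm (d : ℕ → ℂ) (c : ℝ) (hd : ∀ k, ‖d k‖ ≤ c) : ‖diagL d c hd‖ ≤ c :=
  LinearMap.mkContinuous_norm_le _ ((norm_nonneg (d 0)).trans (hd 0)) _

end diag

/-- sandwiched diagonal operator on H -/
def sand (d : ℕ → ℂ) (c : ℝ) (hd : ∀ k, ‖d k‖ ≤ c) : H →L[ℂ] H :=
  PhiL e he ∘L diagL d c hd ∘L beta e he

lemma sand_apply (d : ℕ → ℂ) (c : ℝ) (hd : ∀ k, ‖d k‖ ≤ c) (x : H) :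
    sand e he d c hd x = PhiL e he (diagL d c hd (beta e he x)) := rfl

lemma sand_norm (d : ℕ → ℂ) (c : ℝ) (hd : ∀ k, ‖d k‖ ≤ c) : ‖sand e he d c hd‖ ≤ c := by
  have hc0 : 0 ≤ c := (norm_nonneg (d 0)).trans (hd 0)
  apply ContinuousLinearMap.opNorm_le_bound _ hc0
  intro x
  rw [sand_apply, norm_phiL]
  calc ‖diagL d c hd (beta e he x)‖ ≤ c * ‖beta e he x‖ :=
        (diagL d c hd).le_of_opNorm_le (diagL_norm d c hd) _
    _ ≤ c * ‖x‖ := mul_le_mul_of_nonneg_left (norm_beta_le e he x) hc0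

lemma sand_sub (d1 d2 d3 : ℕ → ℂ) (c1 c2 c3 : ℝ) (h1 : ∀ k, ‖d1 k‖ ≤ c1)
    (h2 : ∀ k, ‖d2 k‖ ≤ c2) (h3 : ∀ k, ‖d3 k‖ ≤ c3) (hd : ∀ k, d3 k = d1 k - d2 k) :
    sand e he d1 c1 h1 - sand e he d2 c2 h2 = sand e he d3 c3 h3 := by
  ext x
  have : diagL d1 c1 h1 (beta e he x) - diagL d2 c2 h2 (beta e he x)
      = diagL d3 c3 h3 (beta e he x) := by
    apply lp.ext
    funext k
    simp only [lp.coeFn_sub, Pi.sub_apply, diagL_apply, hd k]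
    ring
  simp only [ContinuousLinearMap.sub_apply, sand_apply, ← map_sub, this]

lemma sand_e (d : ℕ → ℂ) (c : ℝ) (hd : ∀ k, ‖d k‖ ≤ c) (k : ℕ) :
    sand e he d c hd (e k) = d k • e k := by
  rw [sand_apply, beta_e]
  have : diagL d c hd (lp.single 2 k 1) = lp.single 2 k (d k) := by
    apply lp.ext
    funext j
    rw [diagL_apply]
    rcases eq_or_ne j k with rfl | h
    · rw [lp.single_apply_self, lp.single_apply_self, mul_one]
    · rw [lp.single_apply_ne 2 k _ h, lp.single_apply_ne 2 k _ h, mul_zero]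
  rw [this, phiL_apply, phi_single]

lemma sand_rank (d : ℕ → ℂ) (c : ℝ) (hd : ∀ k, ‖d k‖ ≤ c) (n : ℕ)
    (hz : ∀ k, n ≤ k → d k = 0) : RankLE n (sand e he d c hd) := by
  classical
  set s : Finset H := (Finset.range n).image e with hs
  refine ⟨Submodule.span ℂ (s : Set H), FiniteDimensional.span_of_finite ℂ s.finite_toSet,
    (finrank_span_finset_le_card s).trans ((Finset.card_image_le).trans (by simp)), ?_⟩
  rintro x ⟨y, rfl⟩
  have hdiag : diagL d c hd (beta e he y)
      = ∑ k ∈ Finset.range n, lp.single 2 k (d k * beta e he y k) := by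
    apply lp.ext
    funext j
    rw [lp.coeFn_sum]
    rw [Finset.sum_apply]
    have : ∀ k ∈ Finset.range n, (lp.single 2 k (d k * beta e he y k) : L2) j
        = if j = k then d j * beta e he y j else 0 := by
      intro k _
      rcases eq_or_ne j k with rfl | h
      · rw [lp.single_apply_self, if_pos rfl]
      · rw [lp.single_apply_ne 2 k _ h, if_neg h]
    rw [Finset.sum_congr rfl this, Finset.sum_ite_eq (Finset.range n) j
      (fun _ => d j * beta e he y j)]
    by_cases hj : j ∈ Finset.range n
    · rw [if_pos hj, diagL_apply]
    · rw [if_neg hj, diagL_apply, hz j (by simpa using hj), zero_mul]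
  have : sand e he d c hd y
      = ∑ k ∈ Finset.range n, (d k * beta e he y k) • e k := by
    rw [sand_apply, hdiag, map_sum]
    exact Finset.sum_congr rfl fun k _ => by rw [phiL_apply, phi_single]
  show sand e he d c hd y ∈ Submodule.span ℂ (s : Set H)
  rw [this]
  apply Submodule.sum_mem
  intro k hk
  exact Submodule.smul_mem _ _ (Submodule.subset_span
    (by exact Finset.mem_coe.2 (Finset.mem_image_of_mem e hk)))

include he in
/-- lower bound on approximation by finite rank operators for diagonal-like operators -/
lemma diag_lower (T : H →L[ℂ] H) (t : ℕ → ℂ) (hT : ∀ i, T (e i) = t i • e i)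
    (m : ℕ) (b : ℝ) (hb : 0 ≤ b) (htb : ∀ i, i ≤ m → b ≤ ‖t i‖) :
    ∀ F : H →L[ℂ] H, RankLE m F → b ≤ ‖T - F‖ := by
  rintro F ⟨p, hp1, hp2, hp3⟩
  set v : Fin (m + 1) → H := fun i => e i with hv
  have hvon : Orthonormal ℂ v := he.comp _ Fin.val_injective
  set W : Submodule ℂ H := Submodule.span ℂ (Set.range v) with hW
  haveI : FiniteDimensional ℂ W := FiniteDimensional.span_of_finite ℂ (Set.finite_range v)
  have hWrank : Module.finrank ℂ W = m + 1 := by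
    rw [hW, finrank_span_eq_card hvon.linearIndependent]
    simp
  set g : W →ₗ[ℂ] p :=
    LinearMap.codRestrict p (((F : H →ₗ[ℂ] H)).comp W.subtype)
      (fun w => hp3 ⟨w, rfl⟩) with hg
  have hginj : ¬ Function.Injective g := by
    intro hinj
    have := LinearMap.finrank_le_finrank_of_injective hinj
    rw [hWrank] at this
    omega
  rw [Function.not_injective_iff] at hginj
  obtain ⟨a, a', hgaa, hne⟩ := hginj
  set x : W := a - a' with hx
  have hx0 : x ≠ 0 := sub_ne_zero.2 hne
  have hFx : F (x : H) = 0 := by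
    have : g x = 0 := by rw [hx, map_sub, hgaa, sub_self]
    have h2 := congrArg (Subtype.val) this
    simpa [hg] using h2
  have hxW : (x : H) ∈ Submodule.span ℂ (Set.range v) := x.2
  rw [Submodule.mem_span_range_iff_exists_fun] at hxW
  obtain ⟨cc, hcc⟩ := hxW
  -- compute norms
  have hTx : T (x : H) = ∑ i, (cc i * t i) • v i := by
    rw [← hcc, map_sum]
    refine Finset.sum_congr rfl fun i _ => ?_
    show T (cc i • e (i : ℕ)) = (cc i * t i) • e (i : ℕ)
    rw [map_smul, hT, smul_smul]
  have hnx : ‖(x : H)‖ ^ 2 = ∑ i, ‖cc i‖ ^ 2 := by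
    rw [← hcc]
    have := hvon.orthogonalFamily.norm_sum cc Finset.univ
    simpa [LinearIsometry.toSpanSingleton_apply] using this
  have hnTx : ‖T (x : H)‖ ^ 2 = ∑ i, ‖cc i * t i‖ ^ 2 := by
    rw [hTx]
    have := hvon.orthogonalFamily.norm_sum (fun i => cc i * t i) Finset.univ
    simpa [LinearIsometry.toSpanSingleton_apply] using this
  have hlow : (b * ‖(x : H)‖) ^ 2 ≤ ‖T (x : H)‖ ^ 2 := by
    rw [hnTx, mul_pow, hnx, Finset.mul_sum]
    apply Finset.sum_le_sum
    intro i _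
    rw [norm_mul, mul_pow]
    have hbi : b ≤ ‖t i‖ := htb i (by omega)
    nlinarith [sq_nonneg ‖cc i‖, mul_le_mul hbi hbi hb (norm_nonneg (t i))]
  have hlow2 : b * ‖(x : H)‖ ≤ ‖T (x : H)‖ :=
    le_of_pow_le_pow_left₀ two_ne_zero (norm_nonneg _) hlow
  have hxpos : 0 < ‖(x : H)‖ := by
    rw [norm_pos_iff]
    exact fun hc => hx0 (Subtype.ext hc)
  have hfinal : b * ‖(x : H)‖ ≤ ‖T - F‖ * ‖(x : H)‖ := by
    calc b * ‖(x : H)‖ ≤ ‖T (x : H)‖ := hlow2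
      _ = ‖(T - F) (x : H)‖ := by rw [ContinuousLinearMap.sub_apply, hFx, sub_zero]
      _ ≤ ‖T - F‖ * ‖(x : H)‖ := (T - F).le_opNorm _
  exact le_of_mul_le_mul_right hfinal hxpos


section spec

variable (e : ℕ → H) (he : Orthonormal ℂ e)

/-- the diagonal sequence 1/(k+1) -/
def dS : ℕ → ℂ := fun k => (((k : ℝ) + 1)⁻¹ : ℝ)

lemma dS_norm (k : ℕ) : ‖dS k‖ = ((k : ℝ) + 1)⁻¹ := by
  rw [dS, Complex.norm_real, Real.norm_eq_abs, abs_of_pos (by positivity)]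

lemma dS_le_one (k : ℕ) : ‖dS k‖ ≤ 1 := by
  rw [dS_norm]
  rw [inv_le_one_iff₀]
  right
  have : (0:ℝ) ≤ (k:ℝ) := Nat.cast_nonneg k
  linarith

/-- the operator with singular values 1/(k+1) -/
def Sop : H →L[ℂ] H := sand e he dS 1 dS_le_one

lemma Sop_e (k : ℕ) : Sop e he (e k) = dS k • e k := sand_e e he dS 1 dS_le_one k

lemma Sop_appr (n : ℕ) : appr n (Sop e he) ≤ 1 / ((n : ℝ) + 1) := by
  classical
  set dcut : ℕ → ℂ := fun k => if k < n then dS k else 0 with hdcut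
  set dtail : ℕ → ℂ := fun k => if k < n then 0 else dS k with hdtail
  have hcut_le : ∀ k, ‖dcut k‖ ≤ 1 := by
    intro k; rw [hdcut]; dsimp only
    split
    · exact dS_le_one k
    · simp
  have htail_le : ∀ k, ‖dtail k‖ ≤ ((n:ℝ) + 1)⁻¹ := by
    intro k; rw [hdtail]; dsimp only
    split
    · simp; positivity
    · rw [dS_norm]
      apply inv_anti₀ (by positivity)
      have : n ≤ k := by omega
      exact_mod_cast add_le_add (Nat.cast_le.2 this) le_rfl
  have hrank : RankLE n (sand e he dcut 1 hcut_le) := by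
    apply sand_rank
    intro k hk
    rw [hdcut]; simp [Nat.not_lt.2 hk]
  have hsub : Sop e he - sand e he dcut 1 hcut_le
      = sand e he dtail (((n:ℝ) + 1)⁻¹) htail_le := by
    apply sand_sub
    intro k
    rw [hdcut, hdtail]; dsimp only
    split <;> simp
  calc appr n (Sop e he) ≤ ‖Sop e he - sand e he dcut 1 hcut_le‖ := appr_le _ hrank
    _ = ‖sand e he dtail (((n:ℝ) + 1)⁻¹) htail_le‖ := by rw [hsub]
    _ ≤ ((n:ℝ) + 1)⁻¹ := sand_norm e he _ _ _
    _ = 1 / ((n : ℝ) + 1) := (one_div _).symm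

lemma Sop_mem_Jid : Sop e he ∈ Jid := ⟨1, fun n => Sop_appr e he n⟩

lemma Sop_sq_e (k : ℕ) : (Sop e he * Sop e he) (e k) = (dS k * dS k) • e k := by
  have : (Sop e he * Sop e he) (e k) = Sop e he (Sop e he (e k)) := rfl
  rw [this, Sop_e, map_smul, Sop_e, smul_smul]

lemma Sop_sq_lower (m : ℕ) : 1 / ((m : ℝ) + 1) ^ 2 ≤ appr m (Sop e he * Sop e he) := by
  apply le_appr
  apply diag_lower e he _ (fun k => dS k * dS k) (fun k => Sop_sq_e e he k) m
  · positivity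
  · intro i hi
    rw [norm_mul, dS_norm]
    have h1 : ((m:ℝ) + 1)⁻¹ ≤ ((i:ℝ) + 1)⁻¹ → True := fun _ => trivial
    have hmi : ((i:ℝ) + 1) ≤ ((m:ℝ) + 1) := by
      have : (i:ℝ) ≤ (m:ℝ) := Nat.cast_le.2 hi
      linarith
    have h2 : ((m:ℝ) + 1)⁻¹ ≤ ((i:ℝ) + 1)⁻¹ := inv_anti₀ (by positivity) hmi
    have h3 : (0:ℝ) < ((m:ℝ) + 1)⁻¹ := by positivity
    calc 1 / ((m : ℝ) + 1) ^ 2 = ((m:ℝ) + 1)⁻¹ * ((m:ℝ) + 1)⁻¹ := by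
          rw [one_div, sq, mul_inv]
      _ ≤ ((i:ℝ) + 1)⁻¹ * ((i:ℝ) + 1)⁻¹ := mul_le_mul h2 h2 h3.le (by positivity)

end spec

end Stmt9
end

/-- there exist a `B(H)`-ideal `J` and `S ∈ J` with
`J(S)J ⊊ JS + SJ + J(S)J`; specifically some `A ∈ J` has `AS ∉ J(S)J`. -/
theorem stmt_9 [SeparableSpace H] (hinf : ¬ FiniteDimensional ℂ H) :
    ∃ (J : Set (H →L[ℂ] H)) (S : H →L[ℂ] H), IsBHIdeal J ∧ S ∈ J ∧
      JGenJ J {S} ⊂ JSplus J S ∧ ∃ A ∈ J, A * S ∉ JGenJ J {S} := by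
  classical
  -- obtain an orthonormal sequence indexed by ℕ
  obtain ⟨w, b, hb⟩ := exists_hilbertBasis ℂ H
  have hon : Orthonormal ℂ ((↑) : w → H) := hb ▸ b.orthonormal
  have hdist : ∀ x ∈ w, ∀ y ∈ w, x ≠ y → (1 : ℝ) ≤ dist x y := by
    intro x hx y hy hxy
    have hinner : @inner ℂ _ _ x y = 0 := by
      have := hon.2 (i := ⟨x, hx⟩) (j := ⟨y, hy⟩) (by simpa using hxy)
      simpa using this
    have hx1 : ‖x‖ = 1 := by simpa using hon.1 ⟨x, hx⟩
    have hy1 : ‖y‖ = 1 := by simpa using hon.1 ⟨y, hy⟩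
    have hsq : ‖x - y‖ ^ 2 = 2 := by
      rw [@norm_sub_sq ℂ, hinner, hx1, hy1]
      norm_num
    have h0 : (0:ℝ) ≤ ‖x - y‖ := norm_nonneg _
    have : (1:ℝ) ≤ ‖x - y‖ := by nlinarith
    rwa [dist_eq_norm]
  have hcw : w.Countable := by
    apply Set.PairwiseDisjoint.countable_of_isOpen
      (s := fun x : H => Metric.ball x (1/2))
      (fun x hx y hy hxy => Metric.ball_disjoint_ball (by
        have := hdist x hx y hy hxy
        linarith))
      (fun x _ => Metric.isOpen_ball)
      (fun x _ => Metric.nonempty_ball.2 (by norm_num))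
  have hwinf : w.Infinite := by
    by_contra hfin
    rw [Set.not_infinite] at hfin
    haveI : FiniteDimensional ℂ (Submodule.span ℂ w) := FiniteDimensional.span_of_finite ℂ hfin
    have hclosed : IsClosed ((Submodule.span ℂ w : Submodule ℂ H) : Set H) :=
      Submodule.closed_of_finiteDimensional _
    have hdense : (Submodule.span ℂ (Set.range ⇑b)).topologicalClosure = ⊤ := b.dense_span
    rw [hb, Subtype.range_coe] at hdense
    have htop : (Submodule.span ℂ w : Submodule ℂ H) = ⊤ := by
      apply le_antisymm le_top
      rw [← hdense]
      exact Submodule.topologicalClosure_minimal _ le_rfl hclosed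
    apply hinf
    haveI : FiniteDimensional ℂ (⊤ : Submodule ℂ H) := htop ▸ inferInstance
    exact (Submodule.topEquiv (R := ℂ) (M := H)).finiteDimensional
  haveI : Countable ↥w := hcw.to_subtype
  haveI : Infinite ↥w := hwinf.to_subtype
  haveI : Denumerable ↥w := (nonempty_denumerable ↥w).some
  set eqv : ℕ ≃ ↥w := (Denumerable.eqv ↥w).symm with heqv
  set e : ℕ → H := fun n => ((eqv n : ↥w) : H) with he_def
  have he : Orthonormal ℂ e := hon.comp _ eqv.injective
  -- assemble
  set S : H →L[ℂ] H := Stmt9.Sop e he with hS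
  have hSJ : S ∈ Stmt9.Jid := Stmt9.Sop_mem_Jid e he
  have hnot : S * S ∉ JGenJ Stmt9.Jid {S} :=
    Stmt9.not_mem_JGenJ hSJ (fun m => Stmt9.Sop_sq_lower e he m)
  have h0J : (0 : H →L[ℂ] H) ∈ Stmt9.Jid := Stmt9.Jid_isBHIdeal.1
  have h0gen : (0 : H →L[ℂ] H) ∈ JGenJ Stmt9.Jid {S} :=
    ⟨0, Fin.elim0, Fin.elim0, Fin.elim0, fun i => i.elim0, by simp⟩
  have hsub : JGenJ Stmt9.Jid {S} ⊆ JSplus Stmt9.Jid S := by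
    intro Y hY
    exact ⟨0, h0J, 0, h0J, Y, hY, by simp⟩
  have hmemplus : S * S ∈ JSplus Stmt9.Jid S :=
    ⟨S, hSJ, 0, h0J, 0, h0gen, by simp⟩
  refine ⟨Stmt9.Jid, S, Stmt9.Jid_isBHIdeal, hSJ, ⟨hsub, fun hcon => hnot (hcon hmemplus)⟩,
    S, hSJ, hnot⟩
end

section
/- Let J be a B(H)-ideal and let I be a J-ideal that contains some nonzero operator. Then I contains every finite-rank operator, i.e., F(H) ⊆ I. -/
open scoped BigOperators
open TopologicalSpace

variable {H : Type*} [NormedAddCommGroup H] [InnerProductSpace ℂ H] [CompleteSpace H]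

noncomputable def rkOne (f g : H) : H →L[ℂ] H := (innerSL ℂ f).smulRight g

lemma rkOne_apply (f g x : H) : rkOne f g x = (inner ℂ f x : ℂ) • g := rfl

/-- every nonzero `J`-ideal contains all finite-rank operators. -/
theorem stmt_11 [SeparableSpace H] (hinf : ¬ FiniteDimensional ℂ H)
    (J I : Set (H →L[ℂ] H)) (hJ : IsBHIdeal J) (hI : IsSubideal J I)
    (hne : ∃ x ∈ I, x ≠ 0) :
    ∀ T : H →L[ℂ] H, IsFiniteRank T → T ∈ I := by
  obtain ⟨X, hXI, hX0⟩ := hne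
  have hXJ : X ∈ J := hI.1 hXI
  obtain ⟨v, hv⟩ : ∃ v, X v ≠ 0 := by
    by_contra h
    push_neg at h
    exact hX0 (ContinuousLinearMap.ext fun x => by simp [h x])
  set w := X v with hwdef
  have hw2 : (inner ℂ w w : ℂ) ≠ 0 := inner_self_ne_zero.mpr hv
  have key : ∀ f g : H, rkOne f g
      = rkOne w g * X * rkOne f (((inner ℂ w w : ℂ))⁻¹ • v) := by
    intro f g
    ext x
    simp only [ContinuousLinearMap.mul_apply, rkOne_apply, inner_smul_right, map_smul,
      smul_smul, ← hwdef]
    rw [mul_assoc, inv_mul_cancel₀ hw2, mul_one]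
  have hJrk : ∀ f g : H, rkOne f g ∈ J := by
    intro f g
    rw [key f g]
    exact (hJ.2.2.2 (rkOne f _) _ ((hJ.2.2.2 (rkOne w g) X hXJ).1)).2
  have hIrk : ∀ f g : H, rkOne f g ∈ I := by
    intro f g
    rw [key f g, mul_assoc]
    exact (hI.2.2.2.2 (rkOne w g) (hJrk w g) _
      ((hI.2.2.2.2 _ (hJrk _ _) X hXI).2)).1
  intro T hT
  haveI : FiniteDimensional ℂ (LinearMap.range (T : H →ₗ[ℂ] H)) := hT
  set V := LinearMap.range (T : H →ₗ[ℂ] H) with hV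
  let b := stdOrthonormalBasis ℂ V
  have hdecomp : T = ∑ i, rkOne (ContinuousLinearMap.adjoint T ((b i : V) : H)) ((b i : V) : H) := by
    ext x
    have hmem : T x ∈ V := LinearMap.mem_range_self _ x
    have h1 := congrArg (Subtype.val) (b.sum_repr ⟨T x, hmem⟩)
    simp only [Submodule.coe_sum, Submodule.coe_smul, b.repr_apply_apply] at h1
    rw [ContinuousLinearMap.sum_apply]
    rw [show T x = _ from h1.symm]
    refine Finset.sum_congr rfl fun i _ => ?_
    rw [rkOne_apply, ContinuousLinearMap.adjoint_inner_left]
    rfl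
  rw [hdecomp]
  exact Finset.sum_induction _ (· ∈ I)
    (fun a c ha hc => hI.2.2.1 a ha c hc) hI.2.1 (fun i _ => hIrk _ _)
end
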